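/- arXiv:1803.06007 — 5 statements merged into one kernel-verified Lean document; each statement's English description precedes it below -/
import Mathlib

section
/- Let ρ ∈ [0,1]^K with Σ_k ρ_k = 1 and let αₙ ∈ (0,1) be a sequence with lim_n αₙ = 0. Then for all n large enough, (αₙ²/2)·(1 + √αₙ)·χ_{αₙ}(ρ) ≥ D(Q_{αₙ}‖Q_∅) ≥ (αₙ²/2)·(1 − √αₙ)·χ_{αₙ}(ρ). -/
open Finset Filter
open scoped Topology

noncomputable section

/-- `P` is a probability distribution on the finite type `Z`. -/
def IsDist {Z : Type*} [Fintype Z] (P : Z → ℝ) : Prop :=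
  (∀ z, 0 ≤ P z) ∧ ∑ z, P z = 1

/-- Kullback–Leibler divergence `D(P‖Q)` (natural logarithm). -/
def klDiv {Z : Type*} [Fintype Z] (P Q : Z → ℝ) : ℝ :=
  ∑ z, P z * Real.log (P z / Q z)

/-- `P` is absolutely continuous w.r.t. `Q`. -/
def AbsCont {Z : Type*} (P Q : Z → ℝ) : Prop :=
  ∀ z, Q z = 0 → P z = 0

/-- The output mixture `Q_α(z) = Σ_{T⊆[K]} (∏_{k∈T} ρ_k α)(∏_{k∉T}(1-ρ_k α)) Q_T(z)`. -/
def Qmix {K : ℕ} {Z : Type*} [Fintype Z] (Q : Finset (Fin K) → Z → ℝ) (ρ : Fin K → ℝ)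
    (α : ℝ) (z : Z) : ℝ :=
  ∑ T : Finset (Fin K), (∏ k ∈ T, ρ k * α) * (∏ k ∈ Tᶜ, (1 - ρ k * α)) * Q T z

/-- `ζ_α(z) := (Q_α(z) - Q_∅(z))/α`. -/
def zetaMix {K : ℕ} {Z : Type*} [Fintype Z] (Q : Finset (Fin K) → Z → ℝ) (ρ : Fin K → ℝ)
    (α : ℝ) (z : Z) : ℝ :=
  (Qmix Q ρ α z - Q ∅ z) / α

/-- `χ_α(ρ) := Σ_z ζ_α(z)²/Q_∅(z)`. -/
def chiMix {K : ℕ} {Z : Type*} [Fintype Z] (Q : Finset (Fin K) → Z → ℝ) (ρ : Fin K → ℝ)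
    (α : ℝ) : ℝ :=
  ∑ z, (zetaMix Q ρ α z) ^ 2 / Q ∅ z

/-! ### Auxiliary lemmas -/

lemma aux_one_sub_sum_le_prod {ι : Type*} (s : Finset ι) (f : ι → ℝ)
    (h0 : ∀ i ∈ s, 0 ≤ f i) (h1 : ∀ i ∈ s, f i ≤ 1) :
    1 - ∑ i ∈ s, f i ≤ ∏ i ∈ s, (1 - f i) := by
  classical
  induction s using Finset.cons_induction with
  | empty => simp
  | cons a s ha ih =>
    rw [Finset.prod_cons, Finset.sum_cons]
    have h0a := h0 a (Finset.mem_cons_self a s)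
    have h1a := h1 a (Finset.mem_cons_self a s)
    have ihs := ih (fun i hi => h0 i (Finset.mem_cons_of_mem hi))
      (fun i hi => h1 i (Finset.mem_cons_of_mem hi))
    have hs0 : (0:ℝ) ≤ ∑ i ∈ s, f i :=
      Finset.sum_nonneg fun i hi => h0 i (Finset.mem_cons_of_mem hi)
    nlinarith [mul_le_mul_of_nonneg_left ihs (by linarith : (0:ℝ) ≤ 1 - f a)]

lemma aux_abs_g_le (u : ℝ) (hu : |u| ≤ 1/2) :
    |(1+u) * Real.log (1+u) - u - u^2/2| ≤ 4 * |u|^3 := by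
  have h1 : |(-u)| < 1 := by rw [abs_neg]; linarith [abs_nonneg u]
  have key := Real.abs_log_sub_add_sum_range_le h1 2
  rw [show (1 : ℝ) - -u = 1 + u by ring] at key
  simp [Finset.sum_range_succ] at key
  rw [show (-u + u^2/(1+1) + Real.log (1+u)) = Real.log (1+u) - (u - u^2/2) by ring] at key
  have hE : |Real.log (1+u) - (u - u^2/2)| ≤ 2*|u|^3 := by
    refine key.trans ?_
    rw [div_le_iff₀ (by linarith [abs_nonneg u] : (0:ℝ) < 1 - |u|)]
    nlinarith [pow_nonneg (abs_nonneg u) 3, abs_nonneg u]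
  have heq : (1+u)*Real.log (1+u) - u - u^2/2
      = (1+u)*(Real.log (1+u) - (u - u^2/2)) - u^3/2 := by ring
  rw [heq]
  have h1u : |1+u| ≤ 3/2 := by
    rcases abs_le.mp hu with ⟨hl, hr⟩; rw [abs_le]; constructor <;> linarith
  have habs : |(1+u)*(Real.log (1+u) - (u - u^2/2))| ≤ 3*|u|^3 := by
    rw [abs_mul]
    calc |1+u| * |Real.log (1+u) - (u - u^2/2)| ≤ (3/2) * (2*|u|^3) :=
          mul_le_mul h1u hE (abs_nonneg _) (by norm_num)
      _ = 3*|u|^3 := by ring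
  have hu3 : |u^3/2| = |u|^3/2 := by rw [abs_div, abs_pow]; norm_num
  calc |(1+u)*(Real.log (1+u) - (u - u^2/2)) - u^3/2|
      ≤ |(1+u)*(Real.log (1+u) - (u - u^2/2))| + |u^3/2| := abs_sub _ _
    _ ≤ 4*|u|^3 := by rw [hu3]; nlinarith [pow_nonneg (abs_nonneg u) 3]

/-- The mixture coefficient. -/
def mixCoef {K : ℕ} (ρ : Fin K → ℝ) (a : ℝ) (T : Finset (Fin K)) : ℝ :=
  (∏ k ∈ T, ρ k * a) * (∏ k ∈ Tᶜ, (1 - ρ k * a))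

lemma Qmix_eq_coef {K : ℕ} {Z : Type*} [Fintype Z] (Q : Finset (Fin K) → Z → ℝ)
    (ρ : Fin K → ℝ) (a : ℝ) (z : Z) :
    Qmix Q ρ a z = ∑ T : Finset (Fin K), mixCoef ρ a T * Q T z := rfl

section coef

variable {K : ℕ} (ρ : Fin K → ℝ) (a : ℝ)
  (hρ : ∀ k, ρ k ∈ Set.Icc (0 : ℝ) 1) (hρ1 : ∑ k, ρ k = 1)
  (ha0 : 0 < a) (ha1 : a < 1)

include hρ ha0 ha1 in
lemma mixCoef_nonneg (T : Finset (Fin K)) : 0 ≤ mixCoef ρ a T := by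
  apply mul_nonneg
  · exact Finset.prod_nonneg fun k _ => mul_nonneg (hρ k).1 ha0.le
  · refine Finset.prod_nonneg fun k _ => ?_
    have : ρ k * a ≤ 1 * 1 := by
      apply mul_le_mul (hρ k).2 ha1.le ha0.le zero_le_one
    linarith

lemma mixCoef_sum : ∑ T : Finset (Fin K), mixCoef ρ a T = 1 := by
  classical
  have h1 : ∑ T : Finset (Fin K), mixCoef ρ a T
      = ∑ T ∈ (Finset.univ : Finset (Fin K)).powerset,
        (∏ k ∈ T, ρ k * a) * ∏ k ∈ Finset.univ \ T, (1 - ρ k * a) := by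
    rw [Finset.powerset_univ]
    exact Finset.sum_congr rfl fun T _ => by
      rw [mixCoef, Finset.compl_eq_univ_sdiff]
  rw [h1, ← Finset.prod_add]
  simp

include hρ hρ1 ha0 ha1 in
lemma mixCoef_empty_ge : 1 - a ≤ mixCoef ρ a (∅ : Finset (Fin K)) := by
  have h : mixCoef ρ a (∅ : Finset (Fin K)) = ∏ k, (1 - ρ k * a) := by
    simp [mixCoef]
  rw [h]
  have key := aux_one_sub_sum_le_prod Finset.univ (fun k => ρ k * a)
    (fun k _ => mul_nonneg (hρ k).1 ha0.le)
    (fun k _ => by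
      show ρ k * a ≤ 1
      have : ρ k * a ≤ 1 * 1 := mul_le_mul (hρ k).2 ha1.le ha0.le zero_le_one
      linarith)
  rw [← Finset.sum_mul, hρ1, one_mul] at key
  exact key

include hρ ha0 ha1 in
lemma mixCoef_empty_pos : 0 < mixCoef ρ a (∅ : Finset (Fin K)) := by
  have h : mixCoef ρ a (∅ : Finset (Fin K)) = ∏ k, (1 - ρ k * a) := by
    simp [mixCoef]
  rw [h]
  refine Finset.prod_pos fun k _ => ?_
  have : ρ k * a ≤ 1 * a := mul_le_mul_of_nonneg_right (hρ k).2 ha0.le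
  linarith

end coef

section mix

variable {K : ℕ} {Z : Type*} [Fintype Z] (Q : Finset (Fin K) → Z → ℝ)
  (hQ : ∀ U, IsDist (Q U))
  (hAC : ∀ U : Finset (Fin K), U.Nonempty → AbsCont (Q U) (Q ∅))
  (ρ : Fin K → ℝ) (hρ : ∀ k, ρ k ∈ Set.Icc (0 : ℝ) 1) (hρ1 : ∑ k, ρ k = 1)
  (a : ℝ) (ha0 : 0 < a) (ha1 : a < 1)

include hQ in
lemma Q_le_one (T : Finset (Fin K)) (z : Z) : Q T z ≤ 1 := by
  have := Finset.single_le_sum (f := Q T) (fun i _ => (hQ T).1 i) (Finset.mem_univ z)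
  rwa [(hQ T).2] at this

include hQ hρ ha0 ha1 in
lemma Qmix_nonneg (z : Z) : 0 ≤ Qmix Q ρ a z := by
  rw [Qmix_eq_coef]
  exact Finset.sum_nonneg fun T _ =>
    mul_nonneg (mixCoef_nonneg ρ a hρ ha0 ha1 T) ((hQ T).1 z)

include hQ in
lemma Qmix_sum_eq_one : ∑ z, Qmix Q ρ a z = 1 := by
  classical
  have : ∑ z, Qmix Q ρ a z = ∑ T : Finset (Fin K), mixCoef ρ a T * ∑ z, Q T z := by
    simp only [Qmix_eq_coef, Finset.mul_sum]
    exact Finset.sum_comm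
  rw [this]
  simp only [fun T => (hQ T).2, mul_one]
  exact mixCoef_sum ρ a

include hAC in
lemma Qmix_eq_zero (z : Z) (hz : Q ∅ z = 0) : Qmix Q ρ a z = 0 := by
  rw [Qmix_eq_coef]
  refine Finset.sum_eq_zero fun T _ => ?_
  rcases eq_or_ne T ∅ with rfl | hT
  · rw [hz, mul_zero]
  · rw [hAC T (Finset.nonempty_iff_ne_empty.mpr hT) z hz, mul_zero]

include hQ hρ ha0 ha1 in
lemma Qmix_pos (z : Z) (hz : 0 < Q ∅ z) : 0 < Qmix Q ρ a z := by
  classical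
  rw [Qmix_eq_coef, ← Finset.add_sum_erase _ _ (Finset.mem_univ (∅ : Finset (Fin K)))]
  have h1 : 0 < mixCoef ρ a (∅ : Finset (Fin K)) * Q ∅ z :=
    mul_pos (mixCoef_empty_pos ρ a hρ ha0 ha1) hz
  have h2 : 0 ≤ ∑ T ∈ Finset.univ.erase (∅ : Finset (Fin K)), mixCoef ρ a T * Q T z :=
    Finset.sum_nonneg fun T _ =>
      mul_nonneg (mixCoef_nonneg ρ a hρ ha0 ha1 T) ((hQ T).1 z)
  linarith

include hQ hρ hρ1 ha0 ha1 in
lemma Qmix_diff_le (z : Z) : |Qmix Q ρ a z - Q ∅ z| ≤ a := by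
  classical
  have hrw : Qmix Q ρ a z
      = mixCoef ρ a ∅ * Q ∅ z
        + ∑ T ∈ Finset.univ.erase (∅ : Finset (Fin K)), mixCoef ρ a T * Q T z := by
    rw [Qmix_eq_coef, ← Finset.add_sum_erase _ _ (Finset.mem_univ (∅ : Finset (Fin K)))]
  have hsumerase : ∑ T ∈ Finset.univ.erase (∅ : Finset (Fin K)), mixCoef ρ a T
      = 1 - mixCoef ρ a ∅ := by
    rw [Finset.sum_erase_eq_sub (Finset.mem_univ _), mixCoef_sum ρ a]
  have hc0 : 1 - a ≤ mixCoef ρ a ∅ := mixCoef_empty_ge ρ a hρ hρ1 ha0 ha1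
  have hc1 : mixCoef ρ a ∅ ≤ 1 := by
    have := hsumerase
    have h2 : 0 ≤ ∑ T ∈ Finset.univ.erase (∅ : Finset (Fin K)), mixCoef ρ a T :=
      Finset.sum_nonneg fun T _ => mixCoef_nonneg ρ a hρ ha0 ha1 T
    linarith
  have hR1 : ∑ T ∈ Finset.univ.erase (∅ : Finset (Fin K)), mixCoef ρ a T * Q T z
      ≤ 1 - mixCoef ρ a ∅ := by
    rw [← hsumerase]
    refine Finset.sum_le_sum fun T _ => ?_
    have := mixCoef_nonneg ρ a hρ ha0 ha1 T
    nlinarith [Q_le_one Q hQ T z, this]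
  have hR0 : 0 ≤ ∑ T ∈ Finset.univ.erase (∅ : Finset (Fin K)), mixCoef ρ a T * Q T z :=
    Finset.sum_nonneg fun T _ =>
      mul_nonneg (mixCoef_nonneg ρ a hρ ha0 ha1 T) ((hQ T).1 z)
  have hq0 : 0 ≤ Q ∅ z := (hQ ∅).1 z
  have hq1 : Q ∅ z ≤ 1 := Q_le_one Q hQ ∅ z
  rw [hrw, abs_le]
  constructor <;> nlinarith

end mix

/-- for all `n` large enough,
`(αₙ²/2)(1+√αₙ)χ_{αₙ}(ρ) ≥ D(Q_{αₙ}‖Q_∅) ≥ (αₙ²/2)(1-√αₙ)χ_{αₙ}(ρ)`. -/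
theorem covert_process_klDiv_bounds (K : ℕ) (hK : 2 ≤ K) {Z : Type*} [Fintype Z]
    (Q : Finset (Fin K) → Z → ℝ) (hQ : ∀ U, IsDist (Q U))
    (hAC : ∀ U : Finset (Fin K), U.Nonempty → AbsCont (Q U) (Q ∅))
    (ρ : Fin K → ℝ) (hρ : ∀ k, ρ k ∈ Set.Icc (0 : ℝ) 1) (hρ1 : ∑ k, ρ k = 1)
    (α : ℕ → ℝ) (hα : ∀ n, α n ∈ Set.Ioo (0 : ℝ) 1)
    (hα0 : Tendsto α atTop (𝓝 0)) :
    ∃ N : ℕ, ∀ n ≥ N,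
      klDiv (Qmix Q ρ (α n)) (Q ∅) ≤
        (α n) ^ 2 / 2 * (1 + Real.sqrt (α n)) * chiMix Q ρ (α n) ∧
      (α n) ^ 2 / 2 * (1 - Real.sqrt (α n)) * chiMix Q ρ (α n) ≤
        klDiv (Qmix Q ρ (α n)) (Q ∅) := by
  classical
  -- the support of Q ∅ and its minimum positive value
  set S : Finset Z := Finset.univ.filter (fun z => Q ∅ z ≠ 0) with hSdef
  have hSmem : ∀ z, z ∈ S ↔ Q ∅ z ≠ 0 := by
    intro z; simp [hSdef]
  have hSpos : ∀ z ∈ S, 0 < Q ∅ z := fun z hz =>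
    lt_of_le_of_ne ((hQ ∅).1 z) (Ne.symm ((hSmem z).mp hz))
  have hSne : S.Nonempty := by
    have hsum : ∑ z, Q ∅ z ≠ 0 := by rw [(hQ ∅).2]; norm_num
    obtain ⟨z, _, hz⟩ := Finset.exists_ne_zero_of_sum_ne_zero hsum
    exact ⟨z, (hSmem z).mpr hz⟩
  set q0 : ℝ := S.inf' hSne (Q ∅) with hq0def
  have hq0pos : 0 < q0 := (Finset.lt_inf'_iff _).mpr fun z hz => hSpos z hz
  have hq0le1 : q0 ≤ 1 := by
    obtain ⟨z, hz⟩ := hSne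
    exact (Finset.inf'_le _ hz).trans (Q_le_one Q hQ ∅ z)
  have hq0le : ∀ z ∈ S, q0 ≤ Q ∅ z := fun z hz => Finset.inf'_le _ hz
  -- choose N
  have hev : ∀ᶠ n in atTop, α n < (q0/16)^2 :=
    hα0.eventually_lt_const (by positivity)
  obtain ⟨N, hN⟩ := eventually_atTop.mp hev
  refine ⟨N, fun n hn => ?_⟩
  obtain ⟨ha0, ha1⟩ := hα n
  set a := α n with haa
  have haq : a < (q0/16)^2 := hN n hn
  have hsa0 : 0 < Real.sqrt a := Real.sqrt_pos.mpr ha0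
  have hsa : Real.sqrt a ≤ q0/16 := by
    rw [show q0/16 = Real.sqrt ((q0/16)^2) from (Real.sqrt_sq (by positivity)).symm]
    exact Real.sqrt_le_sqrt haq.le
  -- the relative deviation
  set u : Z → ℝ := fun z => (Qmix Q ρ a z - Q ∅ z) / Q ∅ z with hudef
  have hu_eq : ∀ z ∈ S, Qmix Q ρ a z = Q ∅ z * (1 + u z) := by
    intro z hz
    have hq := hSpos z hz
    have e : (Qmix Q ρ a z - Q ∅ z) / Q ∅ z * Q ∅ z = Qmix Q ρ a z - Q ∅ z :=
      div_mul_cancel₀ _ hq.ne'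
    simp only [hudef]
    linear_combination -e
  have hu_bound : ∀ z ∈ S, |u z| ≤ Real.sqrt a / 8 := by
    intro z hz
    have hq := hSpos z hz
    have h1 : |u z| ≤ a / Q ∅ z := by
      rw [hudef]
      simp only []
      rw [abs_div, abs_of_pos hq, div_le_div_iff_of_pos_right hq]
      exact Qmix_diff_le Q hQ ρ hρ hρ1 a ha0 ha1 z
    refine h1.trans ?_
    have h2 : a / Q ∅ z ≤ a / q0 :=
      div_le_div_of_nonneg_left ha0.le hq0pos (hq0le z hz)
    refine h2.trans ?_
    rw [div_le_div_iff₀ hq0pos (by norm_num : (0:ℝ) < 8)]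
    nlinarith [Real.mul_self_sqrt ha0.le, hsa, hsa0, hq0pos]
  have hu_half : ∀ z ∈ S, |u z| ≤ 1/2 := by
    intro z hz
    refine (hu_bound z hz).trans ?_
    nlinarith [hsa, hq0le1, hsa0]
  have hone_u_pos : ∀ z ∈ S, 0 < 1 + u z := by
    intro z hz
    have := (abs_le.mp (hu_half z hz)).1
    linarith
  set D := klDiv (Qmix Q ρ a) (Q ∅) with hDdef
  set X := chiMix Q ρ a with hXdef
  have hD1 : D = ∑ z ∈ S, Qmix Q ρ a z * Real.log (Qmix Q ρ a z / Q ∅ z) := by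
    rw [hDdef, klDiv, hSdef]
    refine (Finset.sum_filter_of_ne fun z _ hne => ?_).symm
    intro h0
    rw [Qmix_eq_zero Q hAC ρ a z h0, zero_mul] at hne
    exact hne rfl
  have hsub : ∑ z ∈ S, (Qmix Q ρ a z - Q ∅ z) = 0 := by
    have h1 : ∑ z ∈ S, (Qmix Q ρ a z - Q ∅ z) = ∑ z, (Qmix Q ρ a z - Q ∅ z) := by
      rw [hSdef]
      refine Finset.sum_filter_of_ne fun z _ hne => ?_
      intro h0
      rw [Qmix_eq_zero Q hAC ρ a z h0, h0, sub_zero] at hne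
      exact hne rfl
    rw [h1, Finset.sum_sub_distrib, Qmix_sum_eq_one Q hQ ρ a, (hQ ∅).2, sub_self]
  have hD : D = ∑ z ∈ S,
      (Qmix Q ρ a z * Real.log (Qmix Q ρ a z / Q ∅ z) - (Qmix Q ρ a z - Q ∅ z)) := by
    rw [Finset.sum_sub_distrib, hsub, sub_zero, hD1]
  have hX2 : a^2/2 * X = ∑ z ∈ S, Q ∅ z * (u z)^2 / 2 := by
    have h1 : X = ∑ z ∈ S, (zetaMix Q ρ a z)^2 / Q ∅ z := by
      rw [hXdef, chiMix, hSdef]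
      refine (Finset.sum_filter_of_ne fun z _ hne => ?_).symm
      intro h0
      rw [h0, div_zero] at hne
      exact hne rfl
    rw [h1, Finset.mul_sum]
    refine Finset.sum_congr rfl fun z hz => ?_
    have hq := hSpos z hz
    have hz0 : zetaMix Q ρ a z = Q ∅ z * u z / a := by
      rw [zetaMix, hudef]
      field_simp
    rw [hz0]
    field_simp
  have hu_eqd : ∀ z ∈ S, Qmix Q ρ a z / Q ∅ z = 1 + u z := by
    intro z hz
    have hq := hSpos z hz
    rw [hu_eq z hz]
    field_simp
  have hpoint : ∀ z ∈ S,
      |(Qmix Q ρ a z * Real.log (Qmix Q ρ a z / Q ∅ z) - (Qmix Q ρ a z - Q ∅ z))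
        - Q ∅ z * (u z)^2 / 2| ≤ Real.sqrt a * (Q ∅ z * (u z)^2 / 2) := by
    intro z hz
    have hq := hSpos z hz
    have hpe := hu_eq z hz
    have heq1 : Qmix Q ρ a z * Real.log (Qmix Q ρ a z / Q ∅ z) - (Qmix Q ρ a z - Q ∅ z)
        - Q ∅ z * (u z)^2/2
        = Q ∅ z * ((1 + u z) * Real.log (1 + u z) - u z - (u z)^2/2) := by
      rw [hu_eqd z hz, hpe]
      ring
    rw [heq1, abs_mul, abs_of_pos hq]
    have hg := aux_abs_g_le (u z) (hu_half z hz)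
    have h8 : 4 * |u z|^3 ≤ Real.sqrt a * (u z)^2 / 2 := by
      have h1 : |u z| ≤ Real.sqrt a / 8 := hu_bound z hz
      have h3 : |u z|^3 = |u z| * (u z)^2 := by rw [← sq_abs]; ring
      nlinarith [mul_le_mul_of_nonneg_right h1 (sq_nonneg (u z))]
    calc Q ∅ z * |(1 + u z) * Real.log (1 + u z) - u z - (u z)^2/2|
        ≤ Q ∅ z * (4 * |u z|^3) := mul_le_mul_of_nonneg_left hg hq.le
      _ ≤ Q ∅ z * (Real.sqrt a * (u z)^2/2) := mul_le_mul_of_nonneg_left h8 hq.le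
      _ = Real.sqrt a * (Q ∅ z * (u z)^2/2) := by ring
  have habs : |D - a^2/2 * X| ≤ Real.sqrt a * (a^2/2 * X) := by
    rw [hD, hX2, ← Finset.sum_sub_distrib, Finset.mul_sum]
    exact (Finset.abs_sum_le_sum_abs _ _).trans (Finset.sum_le_sum hpoint)
  obtain ⟨hlo, hhi⟩ := abs_le.mp habs
  constructor
  · have h : a^2/2 * (1 + Real.sqrt a) * X
        = a^2/2 * X + Real.sqrt a * (a^2/2 * X) := by ring
    rw [h]
    linarith
  · have h : a^2/2 * (1 - Real.sqrt a) * X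
        = a^2/2 * X - Real.sqrt a * (a^2/2 * X) := by ring
    rw [h]
    linarith
end
end

section
/- Let ρ ∈ [0,1]^K with Σ_k ρ_k = 1 and let αₙ ∈ (0,1) be a sequence with lim_n αₙ = 0 and lim_n n·αₙ² = 0. Then lim_n n·D(Q_{αₙ}‖Q_∅) = 0; equivalently, the n-fold product distributions satisfy lim_n D(Q_{αₙ}^{⊗n}‖Q_∅^{⊗n}) = 0. -/
open Finset Filter
open scoped Topology

noncomputable section

lemma kl_term_lower {P Q : ℝ} (hP : 0 ≤ P) (hQ : 0 ≤ Q) (hac : Q = 0 → P = 0) :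
    P - Q ≤ P * Real.log (P / Q) := by
  rcases eq_or_lt_of_le hQ with hQ0 | hQ0
  · rw [hac hQ0.symm, ← hQ0]; simp
  rcases eq_or_lt_of_le hP with hP0 | hP0
  · rw [← hP0]; simp; linarith
  have h := Real.one_sub_inv_le_log_of_pos (div_pos hP0 hQ0)
  have h2 : (P / Q)⁻¹ = Q / P := by field_simp
  rw [h2] at h
  calc P - Q = P * (1 - Q / P) := by field_simp
  _ ≤ P * Real.log (P / Q) := by apply mul_le_mul_of_nonneg_left h hP

lemma kl_term_upper {P Q : ℝ} (hP : 0 ≤ P) (hQ : 0 ≤ Q) (hac : Q = 0 → P = 0) :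
    P * Real.log (P / Q) ≤ (P - Q)^2 / Q + (P - Q) := by
  rcases eq_or_lt_of_le hQ with hQ0 | hQ0
  · rw [hac hQ0.symm, ← hQ0]; simp
  rcases eq_or_lt_of_le hP with hP0 | hP0
  · rw [← hP0]
    have h0 : ((0:ℝ) - Q)^2 / Q + (0 - Q) = 0 := by field_simp; ring
    rw [h0]; simp
  have h := Real.log_le_sub_one_of_pos (div_pos hP0 hQ0)
  calc P * Real.log (P / Q) ≤ P * (P / Q - 1) := mul_le_mul_of_nonneg_left h hP
  _ = (P - Q)^2 / Q + (P - Q) := by field_simp; ring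

lemma klDiv_pi {Z : Type*} [Fintype Z] (n : ℕ) (P Q : Z → ℝ)
    (hP : IsDist P) (hac : AbsCont P Q) :
    klDiv (fun z : Fin n → Z => ∏ j, P (z j)) (fun z : Fin n → Z => ∏ j, Q (z j))
      = n * klDiv P Q := by
  classical
  have key : ∀ z : Fin n → Z,
      (∏ j, P (z j)) * Real.log ((∏ j, P (z j)) / (∏ j, Q (z j)))
        = ∑ j, (∏ i, P (z i)) * Real.log (P (z j) / Q (z j)) := by
    intro z
    by_cases hz : ∀ j, P (z j) ≠ 0
    · have hQz : ∀ j, Q (z j) ≠ 0 := fun j h => hz j (hac _ h)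
      have hdiv : (∏ j, P (z j)) / (∏ j, Q (z j)) = ∏ j, (P (z j) / Q (z j)) :=
        (Finset.prod_div_distrib _ _).symm
      rw [hdiv, Real.log_prod (fun j _ => div_ne_zero (hz j) (hQz j)), Finset.mul_sum]
    · push_neg at hz
      obtain ⟨j, hj⟩ := hz
      have h0 : (∏ i, P (z i)) = 0 := Finset.prod_eq_zero (Finset.mem_univ j) hj
      simp [h0]
  unfold klDiv
  rw [Finset.sum_congr rfl fun z _ => key z, Finset.sum_comm]
  have hfix : ∀ j : Fin n, (∑ z : Fin n → Z, (∏ i, P (z i)) * Real.log (P (z j) / Q (z j)))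
      = klDiv P Q := by
    intro j
    set f : Fin n → Z → ℝ := fun i x => if i = j then P x * Real.log (P x / Q x) else P x with hf
    have hterm : ∀ z : Fin n → Z,
        (∏ i, P (z i)) * Real.log (P (z j) / Q (z j)) = ∏ i, f i (z i) := by
      intro z
      rw [← Finset.prod_erase_mul univ _ (Finset.mem_univ j),
          ← Finset.prod_erase_mul univ (fun i => f i (z i)) (Finset.mem_univ j)]
      have : ∀ i ∈ univ.erase j, f i (z i) = P (z i) := by
        intro i hi
        simp [hf, (Finset.mem_erase.mp hi).1]
      rw [Finset.prod_congr rfl this]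
      simp [hf]
      ring
    rw [Finset.sum_congr rfl fun z _ => hterm z]
    rw [← Fintype.prod_sum f]
    have : ∀ i : Fin n, (∑ x, f i x) = if i = j then klDiv P Q else 1 := by
      intro i
      by_cases hij : i = j <;> simp [hf, hij, klDiv, hP.2]
    rw [Finset.prod_congr rfl fun i _ => this i]
    simp
  rw [Finset.sum_congr rfl fun j _ => hfix j]
  simp [klDiv, mul_comm]

/-- if `αₙ → 0` and `n·αₙ² → 0`, then `n·D(Q_{αₙ}‖Q_∅) → 0`; equivalently the
`n`-fold product distributions satisfy `D(Q_{αₙ}^{⊗n}‖Q_∅^{⊗n}) → 0`. -/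
theorem covert_process_indistinguishable (K : ℕ) (hK : 2 ≤ K) {Z : Type*} [Fintype Z]
    (Q : Finset (Fin K) → Z → ℝ) (hQ : ∀ U, IsDist (Q U))
    (hAC : ∀ U : Finset (Fin K), U.Nonempty → AbsCont (Q U) (Q ∅))
    (ρ : Fin K → ℝ) (hρ : ∀ k, ρ k ∈ Set.Icc (0 : ℝ) 1) (hρ1 : ∑ k, ρ k = 1)
    (α : ℕ → ℝ) (hα : ∀ n, α n ∈ Set.Ioo (0 : ℝ) 1)
    (hα0 : Tendsto α atTop (𝓝 0))
    (hnα2 : Tendsto (fun n : ℕ => (n : ℝ) * (α n) ^ 2) atTop (𝓝 0)) :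
    Tendsto (fun n : ℕ => (n : ℝ) * klDiv (Qmix Q ρ (α n)) (Q ∅)) atTop (𝓝 0) ∧
      Tendsto (fun n : ℕ => klDiv (fun z : Fin n → Z => ∏ j, Qmix Q ρ (α n) (z j))
        (fun z : Fin n → Z => ∏ j, Q ∅ (z j))) atTop (𝓝 0) := by
  classical
  -- basic facts about the Q U
  have hQ1 : ∀ U z, Q U z ≤ 1 := by
    intro U z
    have h := Finset.single_le_sum (f := Q U) (fun i _ => (hQ U).1 i) (Finset.mem_univ z)
    rw [(hQ U).2] at h
    exact h
  -- coefficients of the mixture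
  have hc0 : ∀ a ∈ Set.Icc (0:ℝ) 1, ∀ T : Finset (Fin K),
      0 ≤ (∏ k ∈ T, ρ k * a) * (∏ k ∈ Tᶜ, (1 - ρ k * a)) := by
    intro a ha T
    apply mul_nonneg
    · exact Finset.prod_nonneg fun k _ => mul_nonneg (hρ k).1 ha.1
    · refine Finset.prod_nonneg fun k _ => ?_
      have : ρ k * a ≤ 1 := mul_le_one₀ (hρ k).2 ha.1 ha.2
      linarith
  have hcsum : ∀ a : ℝ,
      (∑ T : Finset (Fin K), (∏ k ∈ T, ρ k * a) * (∏ k ∈ Tᶜ, (1 - ρ k * a))) = 1 := by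
    intro a
    rw [← Fintype.prod_add]
    simp
  -- the mixture is a distribution
  have hmix_dist : ∀ a ∈ Set.Icc (0:ℝ) 1, IsDist (Qmix Q ρ a) := by
    intro a ha
    constructor
    · intro z
      exact Finset.sum_nonneg fun T _ => mul_nonneg (hc0 a ha T) ((hQ T).1 z)
    · unfold Qmix
      rw [Finset.sum_comm]
      have : ∀ T : Finset (Fin K),
          (∑ z, (∏ k ∈ T, ρ k * a) * (∏ k ∈ Tᶜ, (1 - ρ k * a)) * Q T z)
            = (∏ k ∈ T, ρ k * a) * (∏ k ∈ Tᶜ, (1 - ρ k * a)) := by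
        intro T
        rw [← Finset.mul_sum, (hQ T).2, mul_one]
      rw [Finset.sum_congr rfl fun T _ => this T, hcsum]
  -- absolute continuity of the mixture
  have hmix_ac : ∀ a : ℝ, AbsCont (Qmix Q ρ a) (Q ∅) := by
    intro a z hz
    unfold Qmix
    apply Finset.sum_eq_zero
    intro T _
    by_cases hT : T = ∅
    · rw [hT, hz, mul_zero]
    · rw [hAC T (Finset.nonempty_iff_ne_empty.mpr hT) z hz, mul_zero]
  -- closeness of the mixture to Q ∅
  have hmix_close : ∀ a ∈ Set.Icc (0:ℝ) 1, ∀ z, |Qmix Q ρ a z - Q ∅ z| ≤ a := by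
    intro a ha z
    have hrw : Qmix Q ρ a z - Q ∅ z
        = ∑ T : Finset (Fin K),
            (∏ k ∈ T, ρ k * a) * (∏ k ∈ Tᶜ, (1 - ρ k * a)) * (Q T z - Q ∅ z) := by
      unfold Qmix
      simp only [mul_sub]
      rw [Finset.sum_sub_distrib, ← Finset.sum_mul, hcsum, one_mul]
    rw [hrw]
    calc |∑ T : Finset (Fin K),
            (∏ k ∈ T, ρ k * a) * (∏ k ∈ Tᶜ, (1 - ρ k * a)) * (Q T z - Q ∅ z)|
        ≤ ∑ T : Finset (Fin K),
            |(∏ k ∈ T, ρ k * a) * (∏ k ∈ Tᶜ, (1 - ρ k * a)) * (Q T z - Q ∅ z)| :=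
          Finset.abs_sum_le_sum_abs _ _
      _ ≤ ∑ T : Finset (Fin K),
            (∏ k ∈ T, ρ k * a) * (∏ k ∈ Tᶜ, (1 - ρ k * a))
              * (if T = ∅ then 0 else 1) := by
          apply Finset.sum_le_sum
          intro T _
          rw [abs_mul, abs_of_nonneg (hc0 a ha T)]
          apply mul_le_mul_of_nonneg_left _ (hc0 a ha T)
          by_cases hT : T = ∅
          · simp [hT]
          · simp only [hT, if_false]
            rw [abs_sub_le_iff]
            constructor
            · have := hQ1 T z; have := (hQ ∅).1 z; linarith
            · have := hQ1 ∅ z; have := (hQ T).1 z; linarith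
      _ ≤ a := by
          have hsplit : (∑ T : Finset (Fin K),
              (∏ k ∈ T, ρ k * a) * (∏ k ∈ Tᶜ, (1 - ρ k * a)) * (if T = ∅ then 0 else 1))
            = 1 - ∏ k, (1 - ρ k * a) := by
            have hterm : ∀ T : Finset (Fin K),
                (∏ k ∈ T, ρ k * a) * (∏ k ∈ Tᶜ, (1 - ρ k * a)) * (if T = ∅ then 0 else 1)
                  = (∏ k ∈ T, ρ k * a) * (∏ k ∈ Tᶜ, (1 - ρ k * a))
                    - (if (∅ : Finset (Fin K)) = T
                        then (∏ k ∈ T, ρ k * a) * (∏ k ∈ Tᶜ, (1 - ρ k * a)) else 0) := by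
              intro T
              by_cases hT : T = ∅ <;> simp [hT] <;> split_ifs with h <;> simp_all
            rw [Finset.sum_congr rfl fun T _ => hterm T, Finset.sum_sub_distrib, hcsum,
              Finset.sum_ite_eq univ (∅ : Finset (Fin K))]
            simp
          rw [hsplit]
          have haux := aux_one_sub_sum_le_prod Finset.univ (fun k => ρ k * a)
            (fun k _ => mul_nonneg (hρ k).1 ha.1)
            (fun k _ => mul_le_one₀ (hρ k).2 ha.1 ha.2)
          have hsum : (∑ k, ρ k * a) = a := by
            rw [← Finset.sum_mul, hρ1, one_mul]
          rw [hsum] at haux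
          linarith
  -- the minimum positive value of Q ∅
  set pos : Finset Z := Finset.univ.filter (fun z => Q ∅ z ≠ 0) with hposdef
  have hpos : pos.Nonempty := by
    have h1 : (∑ z, Q ∅ z) ≠ 0 := by rw [(hQ ∅).2]; norm_num
    obtain ⟨z, _, hz⟩ := Finset.exists_ne_zero_of_sum_ne_zero h1
    exact ⟨z, Finset.mem_filter.mpr ⟨Finset.mem_univ z, hz⟩⟩
  set c : ℝ := pos.inf' hpos (Q ∅) with hcdef
  have hcpos : 0 < c := by
    rw [hcdef, Finset.lt_inf'_iff]
    intro z hz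
    exact lt_of_le_of_ne ((hQ ∅).1 z) (Ne.symm (Finset.mem_filter.mp hz).2)
  have hcle : ∀ z, Q ∅ z ≠ 0 → c ≤ Q ∅ z := by
    intro z hz
    exact Finset.inf'_le _ (Finset.mem_filter.mpr ⟨Finset.mem_univ z, hz⟩)
  -- KL divergence bounds
  have hkl_nonneg : ∀ n : ℕ, 0 ≤ klDiv (Qmix Q ρ (α n)) (Q ∅) := by
    intro n
    have haIcc : α n ∈ Set.Icc (0:ℝ) 1 := ⟨(hα n).1.le, (hα n).2.le⟩
    have h := Finset.sum_le_sum (s := Finset.univ) (f := fun z => Qmix Q ρ (α n) z - Q ∅ z)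
      (g := fun z => Qmix Q ρ (α n) z * Real.log (Qmix Q ρ (α n) z / Q ∅ z))
      (fun z _ => kl_term_lower ((hmix_dist _ haIcc).1 z) ((hQ ∅).1 z) (hmix_ac (α n) z))
    rw [Finset.sum_sub_distrib, (hmix_dist _ haIcc).2, (hQ ∅).2] at h
    simpa [klDiv] using h
  have hkl_le : ∀ n : ℕ, klDiv (Qmix Q ρ (α n)) (Q ∅)
      ≤ (Fintype.card Z : ℝ) * ((α n)^2 / c) := by
    intro n
    have haIcc : α n ∈ Set.Icc (0:ℝ) 1 := ⟨(hα n).1.le, (hα n).2.le⟩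
    have h1 : klDiv (Qmix Q ρ (α n)) (Q ∅)
        ≤ ∑ z, ((Qmix Q ρ (α n) z - Q ∅ z)^2 / Q ∅ z + (Qmix Q ρ (α n) z - Q ∅ z)) :=
      Finset.sum_le_sum fun z _ =>
        kl_term_upper ((hmix_dist _ haIcc).1 z) ((hQ ∅).1 z) (hmix_ac (α n) z)
    rw [Finset.sum_add_distrib, Finset.sum_sub_distrib, (hmix_dist _ haIcc).2, (hQ ∅).2] at h1
    simp only [sub_self, add_zero] at h1
    have h2 : (∑ z, (Qmix Q ρ (α n) z - Q ∅ z)^2 / Q ∅ z)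
        ≤ ∑ _z : Z, (α n)^2 / c := by
      apply Finset.sum_le_sum
      intro z _
      by_cases hz : Q ∅ z = 0
      · rw [hmix_ac (α n) z hz, hz]
        simp
        positivity
      · apply div_le_div₀ (sq_nonneg _) _ hcpos (hcle z hz)
        calc (Qmix Q ρ (α n) z - Q ∅ z)^2 = |Qmix Q ρ (α n) z - Q ∅ z|^2 := (sq_abs _).symm
        _ ≤ (α n)^2 := by
            apply pow_le_pow_left₀ (abs_nonneg _) (hmix_close (α n) haIcc z)
    rw [Finset.sum_const, Finset.card_univ, nsmul_eq_mul] at h2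
    linarith
  -- first limit
  have hfirst : Tendsto (fun n : ℕ => (n : ℝ) * klDiv (Qmix Q ρ (α n)) (Q ∅)) atTop (𝓝 0) := by
    have hbound : Tendsto (fun n : ℕ => ((Fintype.card Z : ℝ) / c) * ((n : ℝ) * (α n)^2))
        atTop (𝓝 0) := by
      have := hnα2.const_mul ((Fintype.card Z : ℝ) / c)
      simpa using this
    apply squeeze_zero
    · intro n
      exact mul_nonneg (Nat.cast_nonneg n) (hkl_nonneg n)
    · intro n
      calc (n : ℝ) * klDiv (Qmix Q ρ (α n)) (Q ∅)
          ≤ (n : ℝ) * ((Fintype.card Z : ℝ) * ((α n)^2 / c)) :=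
            mul_le_mul_of_nonneg_left (hkl_le n) (Nat.cast_nonneg n)
        _ = ((Fintype.card Z : ℝ) / c) * ((n : ℝ) * (α n)^2) := by ring
    · exact hbound
  refine ⟨hfirst, ?_⟩
  have heq : (fun n : ℕ => klDiv (fun z : Fin n → Z => ∏ j, Qmix Q ρ (α n) (z j))
      (fun z : Fin n → Z => ∏ j, Q ∅ (z j)))
      = fun n : ℕ => (n : ℝ) * klDiv (Qmix Q ρ (α n)) (Q ∅) := by
    funext n
    exact klDiv_pi n _ _ (hmix_dist _ ⟨(hα n).1.le, (hα n).2.le⟩) (hmix_ac (α n))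
  rw [heq]
  exact hfirst
end
end

section
/- Let P and Q be probability distributions on a finite set Z with Q(z) > 0 for all z, set Ψ(z) := P(z) − Q(z), and suppose Ψ(z)/Q(z) ≥ −1/2 for every z. Then D(P‖Q) ≥ Σ_z (Ψ(z)²/(2·Q(z))) · (1 − Ψ(z)/Q(z) − (4/3)·|Ψ(z)|/Q(z)). -/
open Finset

noncomputable section

lemma key_pointwise (t : ℝ) (ht : -(1/2 : ℝ) ≤ t) :
    t ^ 2 / 2 * (1 - t - 4 / 3 * |t|) ≤ (1 + t) * Real.log (1 + t) - t := by
  rcases le_or_gt (3/7 : ℝ) t with hc | hc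
  · have h1 : (0:ℝ) < 1 + t := by linarith
    have h2 : 1 - (1+t)⁻¹ ≤ Real.log (1+t) := Real.one_sub_inv_le_log_of_pos h1
    have h3 : t ≤ (1+t) * Real.log (1+t) := by
      have := mul_le_mul_of_nonneg_left h2 h1.le
      have h4 : (1+t) * (1 - (1+t)⁻¹) = t := by field_simp; ring
      linarith [h4 ▸ this]
    have habs : |t| = t := abs_of_nonneg (by linarith)
    nlinarith [sq_nonneg t, sq_nonneg (t-3/7)]
  · have habs : |(-t)| < 1 := by rw [abs_neg]; exact abs_lt.2 ⟨by linarith, by linarith⟩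
    have H := Real.abs_log_sub_add_sum_range_le habs 3
    simp [Finset.sum_range_succ, abs_neg] at H
    rw [abs_le] at H
    have hlt : |t| < 1 := abs_lt.2 ⟨by linarith, by linarith⟩
    have hd : (0:ℝ) < 1 - |t| := by linarith
    set L := Real.log (1 + t) with hL
    have h1 : t - t^2/2 + t^3/3 - |t|^4/(1-|t|) ≤ L := by nlinarith [H.1]
    set D := |t|^4/(1-|t|) with hDdef
    have hD : D * (1-|t|) = |t|^4 := div_mul_cancel₀ _ hd.ne'
    have hDnn : 0 ≤ D := div_nonneg (by positivity) hd.le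
    have h2 : (1+t) * (t - t^2/2 + t^3/3 - D) ≤ (1+t) * L :=
      mul_le_mul_of_nonneg_left h1 (by linarith)
    rcases le_or_gt 0 t with hp | hn
    · have ha : |t| = t := abs_of_nonneg hp
      rw [ha] at hD hd
      have hD2 : (1+t) * D ≤ (1+t) * (7/4 * t^4) := by
        apply mul_le_mul_of_nonneg_left _ (by linarith)
        rw [hDdef, ha, div_le_iff₀ hd]
        nlinarith [pow_nonneg hp 4]
      nlinarith [mul_nonneg (mul_nonneg (mul_nonneg hp hp) hp) (by linarith : (0:ℝ) ≤ 3/7 - t),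
        mul_nonneg (mul_nonneg (mul_nonneg (mul_nonneg hp hp) hp) hp) (by linarith : (0:ℝ) ≤ 3/7 - t)]
    · have ha : |t| = -t := abs_of_neg hn
      rw [ha] at hD
      have hD3 : (1+t) * D = t^4 := by linear_combination hD
      nlinarith [mul_nonneg (by nlinarith : (0:ℝ) ≤ -t^3) (by linarith : (0:ℝ) ≤ 1 + 2*t)]


/-- a pointwise quadratic lower bound on the KL divergence, where
`Ψ(z) := P(z) - Q(z)` satisfies `Ψ(z)/Q(z) ≥ -1/2` for every `z`. -/
theorem klDiv_lower_bound {Z : Type*} [Fintype Z] (P Q : Z → ℝ)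
    (hP : IsDist P) (hQ : IsDist Q) (hQpos : ∀ z, 0 < Q z)
    (h : ∀ z, -(1/2 : ℝ) ≤ (P z - Q z) / Q z) :
    ∑ z, (P z - Q z) ^ 2 / (2 * Q z) *
        (1 - (P z - Q z) / Q z - 4 / 3 * |P z - Q z| / Q z)
      ≤ klDiv P Q := by

  have hsum : ∑ z, (P z - Q z) = 0 := by
    rw [Finset.sum_sub_distrib, hP.2, hQ.2]; ring
  rw [klDiv, ← sub_zero (∑ z, P z * Real.log (P z / Q z)), ← hsum,
    ← Finset.sum_sub_distrib]
  apply Finset.sum_le_sum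
  intro z _
  have hq := hQpos z
  set t := (P z - Q z) / Q z with htdef
  have hP1 : P z = Q z * (1 + t) := by rw [htdef, mul_add, mul_one, mul_div_cancel₀ (P z - Q z) hq.ne']; ring
  have hps : P z / Q z = 1 + t := by rw [hP1]; field_simp
  have e1 : (P z - Q z) ^ 2 / (2 * Q z) = Q z * (t ^ 2 / 2) := by
    rw [htdef]; field_simp
  have e2 : 4 / 3 * |P z - Q z| / Q z = 4 / 3 * |t| := by
    rw [htdef, abs_div, abs_of_pos hq]; field_simp
  have e3 : P z * Real.log (P z / Q z) - (P z - Q z)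
      = Q z * ((1 + t) * Real.log (1 + t) - t) := by
    rw [hps, hP1]; ring
  rw [e1, e2, e3]
  have := mul_le_mul_of_nonneg_left (key_pointwise t (h z)) hq.le
  nlinarith [this]
end
end

section
/- Let Z be a finite set and, for each subset T ⊆ {1,…,K}, let Q_T be a probability distribution on Z. Assume Q_∅ cannot be written as a convex combination of {Q_T : T ⊆ {1,…,K}, T ≠ ∅}. For each n, let μ⁽ⁿ⁾ ∈ [0,1]^K and define the mixture Q̂ₙ(z) := Σ_{T⊆{1,…,K}} (∏_{k∈T} μ_k⁽ⁿ⁾)(∏_{k∉T}(1 − μ_k⁽ⁿ⁾)) Q_T(z). If Q̂ₙ(z) → Q_∅(z) as n → ∞ for every z ∈ Z, then lim_n μ_k⁽ⁿ⁾ = 0 for every k ∈ {1,…,K}. -/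
open Finset Filter
open scoped Topology

noncomputable section

lemma sum_w_eq_one {K : ℕ} (m : Fin K → ℝ) :
    ∑ T : Finset (Fin K), (∏ k ∈ T, m k) * (∏ k ∈ Tᶜ, (1 - m k)) = 1 := by
  have h := Finset.prod_add (fun k => m k) (fun k => 1 - m k) (Finset.univ : Finset (Fin K))
  simp only [add_sub_cancel, Finset.prod_const_one, Finset.powerset_univ] at h
  refine Eq.trans ?_ h.symm
  exact Finset.sum_congr rfl fun T _ => by rw [Finset.compl_eq_univ_sdiff]

/-- if `Q_∅` is not a convex combination of `{Q_T : T ≠ ∅}` and the mixtures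
`Q̂ₙ` (with per-user one-probabilities `μ⁽ⁿ⁾`) converge pointwise to `Q_∅`, then every
`μ_k⁽ⁿ⁾` tends to `0`. -/
theorem mixture_convergence_forces_mu_zero (K : ℕ) (hK : 2 ≤ K) {Z : Type*} [Fintype Z]
    (Q : Finset (Fin K) → Z → ℝ) (hQ : ∀ T, IsDist (Q T))
    (hNC : ¬ ∃ lam : Finset (Fin K) → ℝ, (∀ T, 0 ≤ lam T) ∧ lam ∅ = 0 ∧
      (∑ T : Finset (Fin K), lam T) = 1 ∧
      ∀ z, Q ∅ z = ∑ T : Finset (Fin K), lam T * Q T z)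
    (μ : ℕ → Fin K → ℝ) (hμ : ∀ n k, μ n k ∈ Set.Icc (0 : ℝ) 1)
    (hconv : ∀ z, Tendsto (fun n => ∑ T : Finset (Fin K),
        (∏ k ∈ T, μ n k) * (∏ k ∈ Tᶜ, (1 - μ n k)) * Q T z) atTop (𝓝 (Q ∅ z))) :
    ∀ k, Tendsto (fun n => μ n k) atTop (𝓝 0) := by
  intro k
  by_contra hk
  -- extract ε > 0 with frequent deviation
  have hk' : ∃ ε > (0:ℝ), ∀ N, ∃ n ≥ N, ε ≤ μ n k := by
    rw [Metric.tendsto_atTop] at hk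
    push_neg at hk
    obtain ⟨ε, hε, h⟩ := hk
    refine ⟨ε, hε, fun N => ?_⟩
    obtain ⟨n, hn, h2⟩ := h N
    refine ⟨n, hn, ?_⟩
    rwa [Real.dist_eq, sub_zero, abs_of_nonneg (hμ n k).1] at h2
  obtain ⟨ε, hε, hfreq⟩ := hk'
  obtain ⟨φ, hφ, hφε⟩ := Filter.extraction_of_frequently_atTop
    (Filter.frequently_atTop.2 hfreq)
  -- compactness
  have hScpt : IsCompact (Set.univ.pi fun _ : Fin K => Set.Icc (0:ℝ) 1) :=
    isCompact_univ_pi fun _ => isCompact_Icc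
  have hmem : ∀ n, μ (φ n) ∈ Set.univ.pi fun _ : Fin K => Set.Icc (0:ℝ) 1 := by
    intro n
    exact Set.mem_univ_pi.2 fun j => hμ (φ n) j
  obtain ⟨a, haS, ψ, hψ, hlim⟩ := hScpt.tendsto_subseq hmem
  have ha : ∀ j, a j ∈ Set.Icc (0:ℝ) 1 := fun j => Set.mem_univ_pi.1 haS j
  set s : ℕ → ℕ := φ ∘ ψ with hs
  have hsmono : StrictMono s := hφ.comp hψ
  -- coordinatewise convergence
  have hcoord : ∀ j, Tendsto (fun n => μ (s n) j) atTop (𝓝 (a j)) := by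
    intro j
    exact (tendsto_pi_nhds.1 hlim) j
  have hak : ε ≤ a k := ge_of_tendsto' (hcoord k) fun n => hφε (ψ n)
  -- weights
  set w : (Fin K → ℝ) → Finset (Fin K) → ℝ :=
    fun m T => (∏ j ∈ T, m j) * (∏ j ∈ Tᶜ, (1 - m j)) with hwdef
  have hw0 : ∀ T, 0 ≤ w a T := by
    intro T
    apply mul_nonneg
    · exact Finset.prod_nonneg fun j _ => (ha j).1
    · exact Finset.prod_nonneg fun j _ => by linarith [(ha j).2]
  have hwsum : ∑ T : Finset (Fin K), w a T = 1 := sum_w_eq_one a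
  -- w a ∅ ≤ 1 - ε
  have hwempty : w a ∅ ≤ 1 - ε := by
    have : w a ∅ = ∏ j ∈ Finset.univ, (1 - a j) := by
      simp [hwdef]
    rw [this, ← Finset.mul_prod_erase Finset.univ _ (Finset.mem_univ k)]
    have h1 : ∏ j ∈ Finset.univ.erase k, (1 - a j) ≤ 1 :=
      Finset.prod_le_one (fun j _ => by linarith [(ha j).2]) (fun j _ => by linarith [(ha j).1])
    have h2 : 0 ≤ 1 - a k := by linarith [(ha k).2]
    calc (1 - a k) * ∏ j ∈ Finset.univ.erase k, (1 - a j)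
        ≤ (1 - a k) * 1 := mul_le_mul_of_nonneg_left h1 h2
      _ = 1 - a k := mul_one _
      _ ≤ 1 - ε := by linarith
  set c : ℝ := 1 - w a ∅ with hc
  have hcpos : 0 < c := by rw [hc]; linarith
  -- limit equation
  have hlimEq : ∀ z, Q ∅ z = ∑ T : Finset (Fin K), w a T * Q T z := by
    intro z
    have h1 : Tendsto (fun n => ∑ T : Finset (Fin K), w (μ (s n)) T * Q T z)
        atTop (𝓝 (Q ∅ z)) := (hconv z).comp hsmono.tendsto_atTop
    have h2 : Tendsto (fun n => ∑ T : Finset (Fin K), w (μ (s n)) T * Q T z)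
        atTop (𝓝 (∑ T : Finset (Fin K), w a T * Q T z)) := by
      apply tendsto_finset_sum
      intro T _
      apply Tendsto.mul_const
      apply Tendsto.mul
      · exact tendsto_finset_prod _ fun j _ => hcoord j
      · exact tendsto_finset_prod _ fun j _ => (tendsto_const_nhds.sub (hcoord j))
    exact tendsto_nhds_unique h1 h2
  -- build lam
  apply hNC
  refine ⟨fun T => if T = ∅ then 0 else w a T / c, ?_, ?_, ?_, ?_⟩
  · intro T
    by_cases hT : T = ∅ <;> simp [hT]
    exact div_nonneg (hw0 T) hcpos.le
  · simp
  · have hsplit : ∑ T : Finset (Fin K), (if T = ∅ then 0 else w a T)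
        = (∑ T : Finset (Fin K), w a T) - w a ∅ := by
      rw [← Finset.sum_erase_add Finset.univ (fun T => if T = ∅ then (0:ℝ) else w a T)
            (Finset.mem_univ ∅),
          ← Finset.sum_erase_add Finset.univ (w a) (Finset.mem_univ ∅)]
      simp only [reduceIte, add_zero, add_sub_cancel_right]
      exact Finset.sum_congr rfl fun T hT => if_neg (Finset.ne_of_mem_erase hT)
    calc ∑ T : Finset (Fin K), (if T = ∅ then (0:ℝ) else w a T / c)
        = (∑ T : Finset (Fin K), (if T = ∅ then 0 else w a T)) / c := by
          rw [Finset.sum_div]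
          exact Finset.sum_congr rfl fun T _ => by by_cases hT : T = ∅ <;> simp [hT]
      _ = c / c := by rw [hsplit, hwsum]
      _ = 1 := div_self hcpos.ne'
  · intro z
    have hsplit2 : ∑ T : Finset (Fin K), (if T = ∅ then 0 else w a T) * Q T z
        = (∑ T : Finset (Fin K), w a T * Q T z) - w a ∅ * Q ∅ z := by
      rw [← Finset.sum_erase_add Finset.univ (fun T => (if T = ∅ then (0:ℝ) else w a T) * Q T z)
            (Finset.mem_univ ∅),
          ← Finset.sum_erase_add Finset.univ (fun T => w a T * Q T z) (Finset.mem_univ ∅)]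
      simp only [reduceIte, zero_mul, add_zero, add_sub_cancel_right]
      exact Finset.sum_congr rfl fun T hT => by rw [if_neg (Finset.ne_of_mem_erase hT)]
    have : ∑ T : Finset (Fin K), (if T = ∅ then (0:ℝ) else w a T / c) * Q T z
        = (∑ T : Finset (Fin K), (if T = ∅ then 0 else w a T) * Q T z) / c := by
      rw [Finset.sum_div]
      refine Finset.sum_congr rfl fun T _ => ?_
      by_cases hT : T = ∅ <;> simp [hT, div_mul_eq_mul_div]
    rw [this, hsplit2, ← hlimEq z]
    field_simp [hcpos.ne']
    ring
end
end

section
/- There exists a constant d > 0, depending only on the channel W_{Y|X[K]}, such that for every μ ∈ [0,1]^K the following holds: if X₁,…,X_K are independent {0,1}-valued random variables with Pr[X_k = 1] = μ_k and Y is generated from X[K] = (X₁,…,X_K) via W_{Y|X[K]}, then for every k ∈ {1,…,K}, I(X_k; Y | X[{1,…,K}∖{k}]) ≤ μ_k·D(P_k‖P_∅) + d·(max_{i} μ_i)·Σ_{i=1}^K μ_i. -/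
open Finset Filter
open scoped Topology Classical

noncomputable section

/-- The binary input vector having ones exactly at the indices in `U`. -/
def xU {K : ℕ} (U : Finset (Fin K)) : Fin K → Bool :=
  fun k => decide (k ∈ U)

/-- Bernoulli distribution on `Bool` with success probability `p`. -/
def bern (p : ℝ) : Bool → ℝ := fun b => if b then p else 1 - p

/-- `n`-fold memoryless extension of a channel `W`. -/
def prodChannel {A Z : Type*} (W : A → Z → ℝ) (n : ℕ)
    (x : Fin n → A) (z : Fin n → Z) : ℝ :=
  ∏ j, W (x j) (z j)

/-- `χ(ρ) := Σ_z (Σ_k ρ_k (Q_k(z) - Q_∅(z)))² / Q_∅(z)` for the warden channel `Wz`. -/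
def chiRho {K : ℕ} {Z : Type*} [Fintype Z] (Wz : (Fin K → Bool) → Z → ℝ)
    (ρ : Fin K → ℝ) : ℝ :=
  ∑ z, (∑ k, ρ k * (Wz (xU {k}) z - Wz (xU ∅) z)) ^ 2 / Wz (xU ∅) z

/-- The distribution `Q̂ⁿ` induced at the warden by a code with encoders `enc`, uniform
messages and uniform keys. -/
def Qhat {K n : ℕ} {Z : Type*} [Fintype Z] (Wz : (Fin K → Bool) → Z → ℝ)
    (M L : Fin K → ℕ) (enc : ∀ k, Fin (M k) × Fin (L k) → Fin n → Bool)
    (z : Fin n → Z) : ℝ :=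
  (∏ k, ((M k : ℝ) * (L k : ℝ)))⁻¹ *
    ∑ m : ∀ k, Fin (M k), ∑ l : ∀ k, Fin (L k),
      prodChannel Wz n (fun j k => enc k (m k, l k) j) z

/-- The average probability of decoding error of a code over the `n`-fold extension of
the channel `Wy`, with uniform messages and uniform keys. -/
def Pe {K n : ℕ} {Y : Type*} [Fintype Y] (Wy : (Fin K → Bool) → Y → ℝ)
    (M L : Fin K → ℕ) (enc : ∀ k, Fin (M k) × Fin (L k) → Fin n → Bool)
    (dec : (Fin n → Y) → (∀ k, Fin (L k)) → ∀ k, Fin (M k)) : ℝ :=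
  (∏ k, ((M k : ℝ) * (L k : ℝ)))⁻¹ *
    ∑ m : ∀ k, Fin (M k), ∑ l : ∀ k, Fin (L k), ∑ y : Fin n → Y,
      prodChannel Wy n (fun j k => enc k (m k, l k) j) y *
        (if dec y l = m then 0 else 1)

/-- `δₙ = D(Q̂ⁿ ‖ Q_∅^{⊗n})`. -/
def deltaN {K n : ℕ} {Z : Type*} [Fintype Z] (Wz : (Fin K → Bool) → Z → ℝ)
    (M L : Fin K → ℕ) (enc : ∀ k, Fin (M k) × Fin (L k) → Fin n → Bool) : ℝ :=
  klDiv (Qhat Wz M L enc) (fun z : Fin n → Z => ∏ j, Wz (xU ∅) (z j))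

/-- Mutual information `I(A;B)` of a finitely-supported joint distribution `p`. -/
def mutInfo {A B : Type*} [Fintype A] [Fintype B] (p : A → B → ℝ) : ℝ :=
  ∑ a, ∑ b, p a b * Real.log (p a b / ((∑ b', p a b') * (∑ a', p a' b)))

/-- Conditional mutual information `I(A;B|C)` of a finitely-supported joint
distribution `p`. -/
def condMutInfo {A B C : Type*} [Fintype A] [Fintype B] [Fintype C]
    (p : A → B → C → ℝ) : ℝ :=
  ∑ a, ∑ b, ∑ c, p a b c *
    Real.log (p a b c * (∑ a', ∑ b', p a' b' c) /
      ((∑ b', p a b' c) * (∑ a', p a' b c)))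

/-- Merge an assignment on the coordinates in `T` with one on the coordinates in `Tᶜ`. -/
def mergeT {K : ℕ} (T : Finset (Fin K)) (a : {i // i ∈ T} → Bool)
    (c : {i // i ∈ Tᶜ} → Bool) : Fin K → Bool :=
  fun i => if h : i ∈ T then a ⟨i, h⟩ else c ⟨i, Finset.mem_compl.mpr h⟩

/-- The channel `W_{Z|X[S]}` obtained from `W` by averaging the inputs outside `S`
according to the independent input distributions `π k`. -/
def margChannel {K : ℕ} {Z : Type*} [Fintype Z] (W : (Fin K → Bool) → Z → ℝ)
    (π : Fin K → Bool → ℝ) (S : Finset (Fin K))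
    (xs : {i // i ∈ S} → Bool) (z : Z) : ℝ :=
  ∑ c : {i // i ∈ Sᶜ} → Bool, (∏ i : {i // i ∈ Sᶜ}, π i.1 (c i)) * W (mergeT S xs c) z

lemma aux_log_ge (x : ℝ) (hx : -2⁻¹ ≤ x) : x - 2*x^2 ≤ Real.log (1+x) := by
  have h1 : (0:ℝ) < 1 + x := by linarith
  have h2 := Real.log_le_sub_one_of_pos (inv_pos.mpr h1)
  rw [Real.log_inv] at h2
  have h3 : 1 - (1+x)⁻¹ ≤ Real.log (1+x) := by linarith
  have h4 : (1 - (1+x)⁻¹) - (x - 2*x^2) = x^2*(1+2*x)/(1+x) := by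
    field_simp; ring
  have h5 : 0 ≤ x^2*(1+2*x)/(1+x) :=
    div_nonneg (mul_nonneg (sq_nonneg x) (by linarith)) h1.le
  linarith

lemma aux_neg_log_le {m : ℝ} (h0 : 0 ≤ m) (h1 : m ≤ 2⁻¹) : -Real.log (1-m) ≤ 2*m := by
  have hpos : (0:ℝ) < 1 - m := by linarith
  have h2 := Real.log_le_sub_one_of_pos (inv_pos.mpr hpos)
  rw [Real.log_inv] at h2
  have h3 : (1-m)⁻¹ ≤ 1 + 2*m := by
    rw [inv_eq_one_div, div_le_iff₀ hpos]; nlinarith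
  linarith

lemma aux_mul_log_inv_le {m : ℝ} (h0 : 0 ≤ m) (h1 : m ≤ 1) : m * Real.log m⁻¹ ≤ 1 := by
  rcases eq_or_lt_of_le h0 with h | h
  · simp [← h]
  · have h2 := Real.log_le_sub_one_of_pos (inv_pos.mpr h)
    have h3 : m * Real.log m⁻¹ ≤ m * (m⁻¹ - 1) := by
      apply mul_le_mul_of_nonneg_left h2 h0
    have h4 : m * (m⁻¹ - 1) = 1 - m := by field_simp
    linarith

lemma klDiv_nonneg' {Z : Type*} [Fintype Z] {P Q : Z → ℝ} (hP : IsDist P) (hQ : IsDist Q)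
    (hAC : AbsCont P Q) : 0 ≤ klDiv P Q := by
  have key : ∀ z, P z - Q z ≤ P z * Real.log (P z / Q z) := by
    intro z
    rcases eq_or_lt_of_le (hP.1 z) with h | h
    · rw [← h]; simp [hQ.1 z]
    · have hQz : 0 < Q z := by
        rcases eq_or_lt_of_le (hQ.1 z) with h' | h'
        · exact absurd (hAC z h'.symm) (by positivity)
        · exact h'
      have h2 := Real.log_le_sub_one_of_pos (div_pos hQz h)
      have h3 : Real.log (Q z / P z) = - Real.log (P z / Q z) := by
        rw [← Real.log_inv]; congr 1; field_simp
      rw [h3] at h2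
      have h4 : 1 - Q z / P z ≤ Real.log (P z / Q z) := by linarith
      have h5 := mul_le_mul_of_nonneg_left h4 h.le
      have h6 : P z * (1 - Q z / P z) = P z - Q z := by field_simp
      linarith
  have := Finset.sum_le_sum (fun z (_ : z ∈ univ) => key z)
  rw [Finset.sum_sub_distrib, hP.2, hQ.2] at this
  simpa [klDiv] using this

lemma sum_pi_bool {ι : Type*} [Fintype ι] (f : ι → Bool → ℝ) :
    ∑ c : ι → Bool, ∏ i, f i (c i) = ∏ i, (∑ b, f i b) := by
  rw [Finset.prod_univ_sum (fun _ => (univ : Finset Bool)) f, Fintype.piFinset_univ]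

lemma klA_crude {Y : Type*} [Fintype Y] (A B : Y → ℝ) (hA : IsDist A) (hBnn : ∀ y, 0 ≤ B y)
    (s t : ℝ) (hs : 0 ≤ s) (hs1 : s ≤ 1) (ht : 0 ≤ t) :
    s * ∑ y, A y * Real.log (A y / (s * A y + t * B y)) ≤ 1 := by
  rcases eq_or_lt_of_le hs with h | h
  · rw [← h]; norm_num
  · have hsum : ∑ y, A y * Real.log (A y / (s*A y + t*B y)) ≤ ∑ y, A y * Real.log s⁻¹ := by
      apply Finset.sum_le_sum
      intro y _
      rcases eq_or_lt_of_le (hA.1 y) with hy | hy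
      · rw [← hy]; simp
      · have hden : 0 < s * A y := by positivity
        have hden2 : s * A y ≤ s * A y + t * B y := by
          have := mul_nonneg ht (hBnn y); linarith
        have hlog : Real.log (A y / (s * A y + t * B y)) ≤ Real.log (A y / (s * A y)) := by
          apply Real.log_le_log (div_pos hy (lt_of_lt_of_le hden hden2))
          exact div_le_div_of_nonneg_left (hA.1 y) hden hden2
        have heq : A y / (s * A y) = s⁻¹ := by
          field_simp
        rw [heq] at hlog
        exact mul_le_mul_of_nonneg_left hlog (hA.1 y)
    have h2 : ∑ y, A y * Real.log s⁻¹ = Real.log s⁻¹ := by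
      rw [← Finset.sum_mul, hA.2, one_mul]
    have h3 := mul_le_mul_of_nonneg_left (le_trans hsum (le_of_eq h2)) hs
    calc s * ∑ y, A y * Real.log (A y / (s * A y + t * B y)) ≤ s * Real.log s⁻¹ := h3
      _ ≤ 1 := aux_mul_log_inv_le hs hs1

lemma klA_bound {Y : Type*} [Fintype Y] (A B : Y → ℝ) (hA : IsDist A) (hB : IsDist B)
    (hAC : AbsCont A B) {m : ℝ} (h0 : 0 ≤ m) (h1 : m ≤ 2⁻¹) :
    ∑ y, A y * Real.log (A y / (m * A y + (1-m) * B y)) ≤ klDiv A B + 2*m := by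
  have hm1 : (0:ℝ) < 1 - m := by linarith
  have step : ∑ y, A y * Real.log (A y / (m * A y + (1-m) * B y)) ≤
      ∑ y, (A y * Real.log (A y / B y) + A y * (-Real.log (1-m))) := by
    apply Finset.sum_le_sum
    intro y _
    rcases eq_or_lt_of_le (hA.1 y) with hy | hy
    · rw [← hy]; simp
    · have hBy : 0 < B y := by
        rcases eq_or_lt_of_le (hB.1 y) with h' | h'
        · exact absurd (hAC y h'.symm) (by positivity)
        · exact h'
      have hden : 0 < (1-m) * B y := by positivity
      have hden2 : (1-m) * B y ≤ m * A y + (1-m) * B y := by nlinarith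
      have hlog : Real.log (A y / (m * A y + (1-m) * B y)) ≤ Real.log (A y / ((1-m) * B y)) := by
        apply Real.log_le_log (by positivity)
        exact div_le_div_of_nonneg_left (hA.1 y) hden hden2
      have heq : Real.log (A y / ((1-m) * B y)) = Real.log (A y / B y) + (-Real.log (1-m)) := by
        rw [Real.log_div (ne_of_gt hy) (by positivity),
          Real.log_mul (ne_of_gt hm1) (ne_of_gt hBy),
          Real.log_div (ne_of_gt hy) (ne_of_gt hBy)]
        ring
      rw [heq] at hlog
      calc A y * Real.log (A y / (m * A y + (1-m) * B y)) ≤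
            A y * (Real.log (A y / B y) + (-Real.log (1-m))) :=
              mul_le_mul_of_nonneg_left hlog hy.le
        _ = A y * Real.log (A y / B y) + A y * (-Real.log (1-m)) := by ring
  have h2 : ∑ y, (A y * Real.log (A y / B y) + A y * (-Real.log (1-m)))
      = klDiv A B + (-Real.log (1-m)) := by
    rw [Finset.sum_add_distrib, ← Finset.sum_mul, hA.2, one_mul, klDiv]
  have h3 := aux_neg_log_le h0 h1
  linarith [step, h2.symm ▸ step]

lemma klB_bound {Y : Type*} [Fintype Y] (A B : Y → ℝ) (hA : IsDist A) (hB : IsDist B)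
    (hAC : AbsCont A B) {m : ℝ} (h0 : 0 ≤ m) (h1 : m ≤ 2⁻¹) :
    ∑ y, B y * Real.log (B y / (m * A y + (1-m) * B y)) ≤
      2*m^2 * ∑ y, (A y - B y)^2 / B y := by
  have key : ∀ y, B y * Real.log (B y / (m * A y + (1-m) * B y)) ≤
      m * (B y - A y) + 2*m^2 * ((A y - B y)^2 / B y) := by
    intro y
    rcases eq_or_lt_of_le (hB.1 y) with hy | hy
    · have hAy : A y = 0 := hAC y hy.symm
      rw [← hy, hAy]; simp
    · set x : ℝ := m * (A y - B y) / B y with hxdef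
      have hx : -2⁻¹ ≤ x := by
        have h2 : -m ≤ x := by
          rw [hxdef, le_div_iff₀ hy]
          nlinarith [hA.1 y]
        linarith
      have hD : m * A y + (1-m) * B y = B y * (1+x) := by
        rw [hxdef]; field_simp; ring
      have h1x : (0:ℝ) < 1 + x := by linarith
      have harg : B y / (m * A y + (1-m) * B y) = (1+x)⁻¹ := by
        rw [hD]; field_simp
      rw [harg, Real.log_inv]
      have hlog := aux_log_ge x hx
      have h5 : B y * (-Real.log (1+x)) ≤ B y * (-(x - 2*x^2)) := by
        apply mul_le_mul_of_nonneg_left (by linarith) hy.le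
      have h6 : B y * (-(x - 2*x^2)) = m * (B y - A y) + 2*m^2 * ((A y - B y)^2 / B y) := by
        rw [hxdef]; field_simp; ring
      calc B y * -Real.log (1+x) ≤ B y * (-(x - 2*x^2)) := h5
        _ = _ := h6
  calc ∑ y, B y * Real.log (B y / (m * A y + (1-m) * B y))
      ≤ ∑ y, (m * (B y - A y) + 2*m^2 * ((A y - B y)^2 / B y)) :=
        Finset.sum_le_sum (fun y _ => key y)
    _ = m * (∑ y, B y - ∑ y, A y) + 2*m^2 * ∑ y, (A y - B y)^2 / B y := by
        rw [Finset.sum_add_distrib, ← Finset.mul_sum, ← Finset.mul_sum, Finset.sum_sub_distrib]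
    _ = 2*m^2 * ∑ y, (A y - B y)^2 / B y := by rw [hA.2, hB.2]; ring



set_option maxHeartbeats 4000000 in
/-- single-letter bound on the conditional mutual information
`I(X_k; Y | X[K∖{k}])` for independent inputs with `Pr[X_i = 1] = μ_i`:
it is at most `μ_k D(P_k‖P_∅) + d·(max_i μ_i)·Σ_i μ_i` for a constant `d` depending only
on the channel. -/
theorem single_letter_condMutInfo_bound (K : ℕ) (hK : 2 ≤ K) {Y : Type*} [Fintype Y]
    (Wy : (Fin K → Bool) → Y → ℝ) (hWy : ∀ x, IsDist (Wy x))
    (hACy : ∀ U : Finset (Fin K), U.Nonempty → ∀ k ∈ U,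
      AbsCont (Wy (xU U)) (Wy (xU {k})) ∧ AbsCont (Wy (xU {k})) (Wy (xU ∅))) :
    ∃ d > 0, ∀ μ : Fin K → ℝ, (∀ i, μ i ∈ Set.Icc (0 : ℝ) 1) → ∀ k : Fin K,
      condMutInfo (fun (b : Bool) (y : Y) (c : {i // i ∈ ({k} : Finset (Fin K))ᶜ} → Bool) =>
          bern (μ k) b * (∏ i : {i // i ∈ ({k} : Finset (Fin K))ᶜ}, bern (μ i.1) (c i)) *
            Wy (mergeT {k} (fun _ => b) c) y) ≤
        μ k * klDiv (Wy (xU {k})) (Wy (xU ∅)) + d * (⨆ i, μ i) * ∑ i, μ i := by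
  classical
  obtain ⟨E, hE0, hEkl, hEchi⟩ : ∃ E : ℝ, 0 ≤ E ∧
      (∀ U V : Finset (Fin K), klDiv (Wy (xU U)) (Wy (xU V)) ≤ E) ∧
      (∀ U V : Finset (Fin K),
        (∑ y, (Wy (xU U) y - Wy (xU V) y)^2 / Wy (xU V) y) ≤ E) := by
    have hchi_nn : ∀ U V : Finset (Fin K),
        0 ≤ ∑ y, (Wy (xU U) y - Wy (xU V) y)^2 / Wy (xU V) y :=
      fun U V => Finset.sum_nonneg fun y _ => div_nonneg (sq_nonneg _) ((hWy _).1 y)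
    have hterm_nn : ∀ U V : Finset (Fin K),
        0 ≤ |klDiv (Wy (xU U)) (Wy (xU V))| +
          ∑ y, (Wy (xU U) y - Wy (xU V) y)^2 / Wy (xU V) y :=
      fun U V => add_nonneg (abs_nonneg _) (hchi_nn U V)
    refine ⟨∑ U : Finset (Fin K), ∑ V : Finset (Fin K),
      (|klDiv (Wy (xU U)) (Wy (xU V))| +
        ∑ y, (Wy (xU U) y - Wy (xU V) y)^2 / Wy (xU V) y),
      Finset.sum_nonneg fun U _ => Finset.sum_nonneg fun V _ => hterm_nn U V, ?_, ?_⟩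
    all_goals {
      intro U V
      have hle_inner : (|klDiv (Wy (xU U)) (Wy (xU V))| +
          ∑ y, (Wy (xU U) y - Wy (xU V) y)^2 / Wy (xU V) y) ≤
          ∑ U' : Finset (Fin K), ∑ V' : Finset (Fin K),
            (|klDiv (Wy (xU U')) (Wy (xU V'))| +
              ∑ y, (Wy (xU U') y - Wy (xU V') y)^2 / Wy (xU V') y) := by
        calc |klDiv (Wy (xU U)) (Wy (xU V))| +
              ∑ y, (Wy (xU U) y - Wy (xU V) y)^2 / Wy (xU V) y
            ≤ ∑ V' : Finset (Fin K), (|klDiv (Wy (xU U)) (Wy (xU V'))| +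
                ∑ y, (Wy (xU U) y - Wy (xU V') y)^2 / Wy (xU V') y) :=
              Finset.single_le_sum (fun V' _ => hterm_nn U V') (Finset.mem_univ V)
          _ ≤ ∑ U' : Finset (Fin K), ∑ V' : Finset (Fin K),
                (|klDiv (Wy (xU U')) (Wy (xU V'))| +
                  ∑ y, (Wy (xU U') y - Wy (xU V') y)^2 / Wy (xU V') y) :=
              Finset.single_le_sum
                (f := fun U' => ∑ V' : Finset (Fin K), (|klDiv (Wy (xU U')) (Wy (xU V'))| +
                  ∑ y, (Wy (xU U') y - Wy (xU V') y)^2 / Wy (xU V') y))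
                (fun U' _ => Finset.sum_nonneg fun V' _ => hterm_nn U' V') (Finset.mem_univ U)
      first
      | exact le_trans (le_trans (le_abs_self _)
          (le_add_of_nonneg_right (hchi_nn U V))) hle_inner
      | exact le_trans (le_add_of_nonneg_left (abs_nonneg _)) hle_inner
    }
  refine ⟨4*E + 2*K + 9, by nlinarith [hE0, Nat.cast_nonneg (α := ℝ) K], ?_⟩
  intro μ hμ k
  have hμ0 : ∀ i, 0 ≤ μ i := fun i => (hμ i).1
  have hμ1 : ∀ i, μ i ≤ 1 := fun i => (hμ i).2
  set m : ℝ := μ k with hmdef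
  have hm0 : 0 ≤ m := hμ0 k
  have hm1 : m ≤ 1 := hμ1 k
  have hbern_nn : ∀ (p : ℝ), 0 ≤ p → p ≤ 1 → ∀ b, 0 ≤ bern p b := by
    intro p h0 h1 b; cases b <;> simp [bern] <;> linarith
  have hbern_le1 : ∀ (p : ℝ), 0 ≤ p → p ≤ 1 → ∀ b, bern p b ≤ 1 := by
    intro p h0 h1 b; cases b <;> simp [bern] <;> linarith
  set q : ({i // i ∈ ({k} : Finset (Fin K))ᶜ} → Bool) → ℝ :=
    fun c => ∏ i, bern (μ i.1) (c i) with hqdef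
  set Wc : Bool → ({i // i ∈ ({k} : Finset (Fin K))ᶜ} → Bool) → Y → ℝ :=
    fun b c => Wy (mergeT {k} (fun _ => b) c) with hWcdef
  set Pb : ({i // i ∈ ({k} : Finset (Fin K))ᶜ} → Bool) → Y → ℝ :=
    fun c y => m * Wc true c y + (1-m) * Wc false c y with hPbdef
  set GA : ({i // i ∈ ({k} : Finset (Fin K))ᶜ} → Bool) → ℝ :=
    fun c => ∑ y, Wc true c y * Real.log (Wc true c y / Pb c y) with hGAdef
  set GB : ({i // i ∈ ({k} : Finset (Fin K))ᶜ} → Bool) → ℝ :=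
    fun c => ∑ y, Wc false c y * Real.log (Wc false c y / Pb c y) with hGBdef
  have hq_nn : ∀ c, 0 ≤ q c := fun c =>
    Finset.prod_nonneg fun i _ => hbern_nn _ (hμ0 _) (hμ1 _) _
  have e1 : ∀ (a : Bool) (c : {i // i ∈ ({k} : Finset (Fin K))ᶜ} → Bool),
      (∑ y : Y, bern m a * (∏ i, bern (μ i.1) (c i)) * Wy (mergeT {k} (fun _ => a) c) y)
        = bern m a * q c := by
    intro a c
    rw [← Finset.mul_sum, (hWy _).2, mul_one, hqdef]
  have e2 : ∀ (y : Y) (c : {i // i ∈ ({k} : Finset (Fin K))ᶜ} → Bool),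
      (∑ a : Bool, bern m a * (∏ i, bern (μ i.1) (c i)) * Wy (mergeT {k} (fun _ => a) c) y)
        = q c * Pb c y := by
    intro y c
    rw [Fintype.sum_bool]
    simp only [hqdef, hPbdef, hWcdef, bern]
    norm_num
    ring
  have e3 : ∀ (c : {i // i ∈ ({k} : Finset (Fin K))ᶜ} → Bool),
      (∑ a : Bool, ∑ y : Y,
        bern m a * (∏ i, bern (μ i.1) (c i)) * Wy (mergeT {k} (fun _ => a) c) y) = q c := by
    intro c
    rw [Fintype.sum_bool, e1, e1]
    simp only [bern]
    norm_num
    ring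
  have e4 : ∀ (a : Bool) (y : Y) (c : {i // i ∈ ({k} : Finset (Fin K))ᶜ} → Bool),
      bern m a * (∏ i, bern (μ i.1) (c i)) * Wy (mergeT {k} (fun _ => a) c) y *
        Real.log (bern m a * (∏ i, bern (μ i.1) (c i)) * Wy (mergeT {k} (fun _ => a) c) y *
            q c / ((bern m a * q c) * (q c * Pb c y)))
      = q c * (bern m a * (Wc a c y * Real.log (Wc a c y / Pb c y))) := by
    intro a y c
    by_cases hz : bern m a * (∏ i, bern (μ i.1) (c i)) * Wy (mergeT {k} (fun _ => a) c) y = 0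
    · rw [hz, zero_mul]
      rcases mul_eq_zero.mp hz with h | h
      · rcases mul_eq_zero.mp h with h' | h'
        · rw [h']; ring
        · have h'' : q c = 0 := h'
          rw [h'']; ring
      · have h'' : Wc a c y = 0 := h
        rw [h'']; simp
    · have h3 := mul_ne_zero_iff.mp hz
      have h4 := mul_ne_zero_iff.mp h3.1
      have hb : bern m a ≠ 0 := h4.1
      have hqc : q c ≠ 0 := h4.2
      have hw : Wy (mergeT {k} (fun _ => a) c) y ≠ 0 := h3.2
      have hbp : 0 < bern m a := lt_of_le_of_ne (hbern_nn m hm0 hm1 a) (Ne.symm hb)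
      have hqp : 0 < q c := lt_of_le_of_ne (hq_nn c) (Ne.symm hqc)
      have hwp : 0 < Wc a c y :=
        lt_of_le_of_ne ((hWy _).1 y) (Ne.symm (by rw [hWcdef]; exact hw))
      have hPbp : 0 < Pb c y := by
        have h1 := (hWy (mergeT {k} (fun _ => true) c)).1 y
        have h2 := (hWy (mergeT {k} (fun _ => false) c)).1 y
        rw [hPbdef]
        cases a
        · have hmm : 0 < 1 - m := by simpa [bern] using hbp
          have : 0 < Wc false c y := hwp
          simp only [hWcdef] at this ⊢
          nlinarith
        · have hmm : 0 < m := by simpa [bern] using hbp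
          have : 0 < Wc true c y := hwp
          simp only [hWcdef] at this ⊢
          nlinarith
      have hqprod : (∏ i, bern (μ i.1) (c i)) = q c := rfl
      have hwc : Wy (mergeT {k} (fun _ => a) c) y = Wc a c y := rfl
      have harg : bern m a * (∏ i, bern (μ i.1) (c i)) * Wy (mergeT {k} (fun _ => a) c) y *
          q c / ((bern m a * q c) * (q c * Pb c y)) = Wc a c y / Pb c y := by
        rw [hqprod, hwc]
        field_simp
      rw [harg, hqprod, hwc]
      ring
  have hA : condMutInfo (fun (b : Bool) (y : Y) (c : {i // i ∈ ({k} : Finset (Fin K))ᶜ} → Bool) =>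
        bern m b * (∏ i : {i // i ∈ ({k} : Finset (Fin K))ᶜ}, bern (μ i.1) (c i)) *
          Wy (mergeT {k} (fun _ => b) c) y)
      = ∑ c : {i // i ∈ ({k} : Finset (Fin K))ᶜ} → Bool, q c * (m * GA c + (1-m) * GB c) := by
    simp only [condMutInfo]
    simp only [e3]
    simp only [e1]
    simp only [e2]
    simp only [e4]
    rw [show (∑ a : Bool, ∑ y : Y, ∑ c : {i // i ∈ ({k} : Finset (Fin K))ᶜ} → Bool,
        q c * (bern m a * (Wc a c y * Real.log (Wc a c y / Pb c y))))
      = ∑ c : {i // i ∈ ({k} : Finset (Fin K))ᶜ} → Bool, ∑ a : Bool, ∑ y : Y,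
        q c * (bern m a * (Wc a c y * Real.log (Wc a c y / Pb c y))) from by
      rw [show (∑ a : Bool, ∑ y : Y, ∑ c : {i // i ∈ ({k} : Finset (Fin K))ᶜ} → Bool,
          q c * (bern m a * (Wc a c y * Real.log (Wc a c y / Pb c y))))
        = ∑ a : Bool, ∑ c : {i // i ∈ ({k} : Finset (Fin K))ᶜ} → Bool, ∑ y : Y,
          q c * (bern m a * (Wc a c y * Real.log (Wc a c y / Pb c y))) from
        Finset.sum_congr rfl fun a _ => Finset.sum_comm]
      exact Finset.sum_comm]
    refine Finset.sum_congr rfl fun c _ => ?_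
    rw [Fintype.sum_bool]
    simp only [← Finset.mul_sum, hGAdef, hGBdef, bern]
    norm_num
    ring
  -- the support of the merged input vector when X_k = 0
  set S : ({i // i ∈ ({k} : Finset (Fin K))ᶜ} → Bool) → Finset (Fin K) :=
    fun c => univ.filter (fun i => mergeT {k} (fun _ => false) c i = true) with hSdef
  have memS : ∀ (c : {i // i ∈ ({k} : Finset (Fin K))ᶜ} → Bool)
      (j : {i // i ∈ ({k} : Finset (Fin K))ᶜ}), (j.1 ∈ S c) ↔ c j = true := by
    intro c j
    have hj : j.1 ∉ ({k} : Finset (Fin K)) := Finset.mem_compl.mp j.2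
    have key : mergeT {k} (fun _ => false) c j.1 = c j := by
      simp only [mergeT]
      rw [dif_neg hj]
    simp only [hSdef, Finset.mem_filter, Finset.mem_univ, true_and, key]
  have hkS : ∀ c, k ∉ S c := by
    intro c
    simp only [hSdef, Finset.mem_filter, Finset.mem_univ, true_and, mergeT]
    rw [dif_pos (Finset.mem_singleton_self k)]
    simp
  have mergeFalse : ∀ c, mergeT {k} (fun _ => false) c = xU (S c) := by
    intro c; funext i
    have hiff : i ∈ S c ↔ mergeT {k} (fun _ => false) c i = true := by
      simp only [hSdef, Finset.mem_filter, Finset.mem_univ, true_and]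
    cases h : mergeT {k} (fun _ => false) c i
    · simp only [xU]
      rw [h] at hiff
      simp [hiff]
    · simp only [xU]
      rw [h] at hiff
      simp [hiff]
  have mergeTrue : ∀ c, mergeT {k} (fun _ => true) c = xU (insert k (S c)) := by
    intro c; funext i
    by_cases hik : i = k
    · subst hik
      simp only [mergeT, xU]
      rw [dif_pos (Finset.mem_singleton_self i)]
      simp
    · have hik' : i ∉ ({k} : Finset (Fin K)) := by simp [hik]
      have h2 : mergeT {k} (fun _ => true) c i = mergeT {k} (fun _ => false) c i := by
        simp only [mergeT]; rw [dif_neg hik', dif_neg hik']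
      rw [h2, mergeFalse c]
      simp only [xU]
      exact decide_eq_decide.mpr (by simp [Finset.mem_insert, hik])
  have hWcF : ∀ c, Wc false c = Wy (xU (S c)) := by
    intro c; rw [hWcdef]; simp only; rw [mergeFalse c]
  have hWcT : ∀ c, Wc true c = Wy (xU (insert k (S c))) := by
    intro c; rw [hWcdef]; simp only; rw [mergeTrue c]
  -- q bounds
  have hq_le1 : ∀ c, q c ≤ 1 := fun c =>
    Finset.prod_le_one (fun i _ => hbern_nn _ (hμ0 _) (hμ1 _) _)
      (fun i _ => hbern_le1 _ (hμ0 _) (hμ1 _) _)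
  have hq_le : ∀ (c) (j : {i // i ∈ ({k} : Finset (Fin K))ᶜ}), c j = true → q c ≤ μ j.1 := by
    intro c j hj
    calc q c = bern (μ j.1) (c j) * ∏ i ∈ univ.erase j, bern (μ i.1) (c i) :=
          (Finset.mul_prod_erase univ _ (Finset.mem_univ j)).symm
      _ ≤ μ j.1 * 1 := by
          apply mul_le_mul
          · rw [hj]; simp [bern]
          · exact Finset.prod_le_one (fun i _ => hbern_nn _ (hμ0 _) (hμ1 _) _)
              (fun i _ => hbern_le1 _ (hμ0 _) (hμ1 _) _)
          · exact Finset.prod_nonneg (fun i _ => hbern_nn _ (hμ0 _) (hμ1 _) _)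
          · exact hμ0 j.1
      _ = μ j.1 := mul_one _
  have hfact : ∀ f : {i // i ∈ ({k} : Finset (Fin K))ᶜ} → Bool → ℝ,
      ∑ c : {i // i ∈ ({k} : Finset (Fin K))ᶜ} → Bool, ∏ i, f i (c i) = ∏ i, ∑ b, f i b := by
    intro f
    rw [Finset.prod_univ_sum (fun _ => (univ : Finset Bool)) f, Fintype.piFinset_univ]
  have hq_sum : ∑ c : {i // i ∈ ({k} : Finset (Fin K))ᶜ} → Bool, q c = 1 := by
    simp only [hqdef]
    rw [hfact (fun i b => bern (μ i.1) b)]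
    apply Finset.prod_eq_one
    intro i _
    rw [Fintype.sum_bool]
    simp [bern]
  have hL0 : ∑ c : {i // i ∈ ({k} : Finset (Fin K))ᶜ} → Bool,
      (if (S c).card = 0 then q c else 0) ≤ 1 := by
    rw [← hq_sum]
    apply Finset.sum_le_sum
    intro c _
    split
    · exact le_rfl
    · exact hq_nn c
  have hL1 : ∑ c : {i // i ∈ ({k} : Finset (Fin K))ᶜ} → Bool,
      (if (S c).card = 1 then q c else 0) ≤ ∑ i : Fin K, μ i := by
    have step1 : ∀ c : {i // i ∈ ({k} : Finset (Fin K))ᶜ} → Bool,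
        (if (S c).card = 1 then q c else 0) ≤
        ∑ i : Fin K, (if (S c).card = 1 ∧ i ∈ S c then μ i else 0) := by
      intro c
      by_cases h : (S c).card = 1
      · obtain ⟨i₀, hi₀⟩ := Finset.card_eq_one.mp h
        have hi₀m : i₀ ∈ S c := by rw [hi₀]; exact Finset.mem_singleton_self i₀
        have hik : i₀ ∈ ({k} : Finset (Fin K))ᶜ := by
          rw [Finset.mem_compl, Finset.mem_singleton]
          intro hcon; exact hkS c (hcon ▸ hi₀m)
        have hcj : c ⟨i₀, hik⟩ = true := (memS c ⟨i₀, hik⟩).mp hi₀m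
        have hqle := hq_le c ⟨i₀, hik⟩ hcj
        rw [if_pos h]
        calc q c ≤ μ i₀ := hqle
          _ = (if (S c).card = 1 ∧ i₀ ∈ S c then μ i₀ else 0) := by rw [if_pos ⟨h, hi₀m⟩]
          _ ≤ ∑ i : Fin K, (if (S c).card = 1 ∧ i ∈ S c then μ i else 0) :=
            Finset.single_le_sum
              (f := fun i : Fin K => if (S c).card = 1 ∧ i ∈ S c then μ i else 0)
              (fun i _ => by
                show (0:ℝ) ≤ if (S c).card = 1 ∧ i ∈ S c then μ i else 0
                split_ifs with hh; exacts [hμ0 i, le_rfl]) (Finset.mem_univ i₀)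
      · rw [if_neg h]
        exact Finset.sum_nonneg fun i _ => by split_ifs with hh; exacts [hμ0 i, le_rfl]
    calc ∑ c, (if (S c).card = 1 then q c else 0)
        ≤ ∑ c, ∑ i : Fin K, (if (S c).card = 1 ∧ i ∈ S c then μ i else 0) :=
          Finset.sum_le_sum fun c _ => step1 c
      _ = ∑ i : Fin K, ∑ c, (if (S c).card = 1 ∧ i ∈ S c then μ i else 0) :=
          Finset.sum_comm
      _ ≤ ∑ i : Fin K, μ i := by
          apply Finset.sum_le_sum
          intro i _
          have huniq : ∀ c ∈ univ.filter
              (fun c : {i // i ∈ ({k} : Finset (Fin K))ᶜ} → Bool =>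
                (S c).card = 1 ∧ i ∈ S c), ∀ c' ∈ univ.filter
              (fun c : {i // i ∈ ({k} : Finset (Fin K))ᶜ} → Bool =>
                (S c).card = 1 ∧ i ∈ S c), c = c' := by
            intro c hc c' hc'
            simp only [Finset.mem_filter, Finset.mem_univ, true_and] at hc hc'
            have hSc : S c = {i} := by
              obtain ⟨a, ha⟩ := Finset.card_eq_one.mp hc.1
              rw [ha] at hc ⊢
              rw [Finset.mem_singleton.mp hc.2]
            have hSc' : S c' = {i} := by
              obtain ⟨a, ha⟩ := Finset.card_eq_one.mp hc'.1
              rw [ha] at hc' ⊢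
              rw [Finset.mem_singleton.mp hc'.2]
            funext j
            have hiff : (c j = true) ↔ (c' j = true) := by
              rw [← memS, ← memS, hSc, hSc']
            cases hcj : c j <;> cases hcj' : c' j
            · rfl
            · rw [hcj, hcj'] at hiff; simp at hiff
            · rw [hcj, hcj'] at hiff; simp at hiff
            · rfl
          have hcard := Finset.card_le_one.mpr huniq
          calc ∑ c, (if (S c).card = 1 ∧ i ∈ S c then μ i else 0)
              = ∑ c ∈ univ.filter (fun c : {i // i ∈ ({k} : Finset (Fin K))ᶜ} → Bool =>
                  (S c).card = 1 ∧ i ∈ S c), μ i := (Finset.sum_filter _ _).symm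
            _ = (univ.filter (fun c : {i // i ∈ ({k} : Finset (Fin K))ᶜ} → Bool =>
                  (S c).card = 1 ∧ i ∈ S c)).card • μ i := Finset.sum_const _
            _ ≤ μ i := by
                rw [nsmul_eq_mul]
                have h1 : ((univ.filter (fun c : {i // i ∈ ({k} : Finset (Fin K))ᶜ} → Bool =>
                    (S c).card = 1 ∧ i ∈ S c)).card : ℝ) ≤ 1 := by exact_mod_cast hcard
                nlinarith [hμ0 i]
  have hL2 : ∑ c : {i // i ∈ ({k} : Finset (Fin K))ᶜ} → Bool,
      (if 2 ≤ (S c).card then q c else 0) ≤ (∑ i : Fin K, μ i)^2 := by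
    set F : {i // i ∈ ({k} : Finset (Fin K))ᶜ} → {i // i ∈ ({k} : Finset (Fin K))ᶜ} →
        ({i // i ∈ ({k} : Finset (Fin K))ᶜ} → Bool) → ℝ :=
      fun i j c => ∏ l, (if l = i ∨ l = j then (if c l then μ l.1 else 0)
        else bern (μ l.1) (c l)) with hFdef
    have hF_nn : ∀ i j c, 0 ≤ F i j c := by
      intro i j c
      apply Finset.prod_nonneg
      intro l _
      split_ifs
      · exact hμ0 l.1
      · exact le_rfl
      · exact hbern_nn _ (hμ0 _) (hμ1 _) _
    have step1 : ∀ c, (if 2 ≤ (S c).card then q c else 0) ≤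
        ∑ i, ∑ j, (if i ≠ j then F i j c else 0) := by
      intro c
      by_cases h : 2 ≤ (S c).card
      · rw [if_pos h]
        obtain ⟨a, ha, b, hb, hab⟩ := Finset.one_lt_card.mp h
        have haC : a ∈ ({k} : Finset (Fin K))ᶜ := by
          rw [Finset.mem_compl, Finset.mem_singleton]
          rintro rfl; exact hkS c ha
        have hbC : b ∈ ({k} : Finset (Fin K))ᶜ := by
          rw [Finset.mem_compl, Finset.mem_singleton]
          rintro rfl; exact hkS c hb
        have hij : (⟨a, haC⟩ : {i // i ∈ ({k} : Finset (Fin K))ᶜ}) ≠ ⟨b, hbC⟩ :=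
          fun h' => hab (congrArg Subtype.val h')
        have hci : c ⟨a, haC⟩ = true := (memS c ⟨a, haC⟩).mp ha
        have hcj : c ⟨b, hbC⟩ = true := (memS c ⟨b, hbC⟩).mp hb
        have hqF : q c = F ⟨a, haC⟩ ⟨b, hbC⟩ c := by
          simp only [hqdef, hFdef]
          apply Finset.prod_congr rfl
          intro l _
          by_cases hl : l = ⟨a, haC⟩ ∨ l = ⟨b, hbC⟩
          · rw [if_pos hl]
            rcases hl with rfl | rfl
            · rw [hci]; simp [bern]
            · rw [hcj]; simp [bern]
          · rw [if_neg hl]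
        rw [hqF]
        calc F ⟨a, haC⟩ ⟨b, hbC⟩ c
            = (if (⟨a, haC⟩ : {i // i ∈ ({k} : Finset (Fin K))ᶜ}) ≠ ⟨b, hbC⟩
                then F ⟨a, haC⟩ ⟨b, hbC⟩ c else 0) := by rw [if_pos hij]
          _ ≤ ∑ j, (if (⟨a, haC⟩ : {i // i ∈ ({k} : Finset (Fin K))ᶜ}) ≠ j
                then F ⟨a, haC⟩ j c else 0) :=
              Finset.single_le_sum
                (f := fun j => if (⟨a, haC⟩ : {i // i ∈ ({k} : Finset (Fin K))ᶜ}) ≠ j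
                  then F ⟨a, haC⟩ j c else 0)
                (fun j _ => by
                  show (0:ℝ) ≤ if _ ≠ j then F _ j c else 0
                  split_ifs; exacts [hF_nn _ _ _, le_rfl]) (Finset.mem_univ (⟨b, hbC⟩ : {i // i ∈ ({k} : Finset (Fin K))ᶜ}))
          _ ≤ ∑ i, ∑ j, (if i ≠ j then F i j c else 0) :=
              Finset.single_le_sum
                (f := fun i => ∑ j, (if i ≠ j then F i j c else 0))
                (fun i _ => Finset.sum_nonneg fun j _ => by
                  show (0:ℝ) ≤ if i ≠ j then F i j c else 0
                  split_ifs; exacts [hF_nn _ _ _, le_rfl]) (Finset.mem_univ (⟨a, haC⟩ : {i // i ∈ ({k} : Finset (Fin K))ᶜ}))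
      · rw [if_neg h]
        exact Finset.sum_nonneg fun i _ => Finset.sum_nonneg fun j _ => by
          show (0:ℝ) ≤ if i ≠ j then F i j c else 0
          split_ifs; exacts [hF_nn _ _ _, le_rfl]
    have step2 : ∀ (i j : {i // i ∈ ({k} : Finset (Fin K))ᶜ}), i ≠ j →
        ∑ c, F i j c = μ i.1 * μ j.1 := by
      intro i j hij
      simp only [hFdef]
      rw [hfact (fun l b => if l = i ∨ l = j then (if b then μ l.1 else 0) else bern (μ l.1) b)]
      have hptwise : ∀ l : {i // i ∈ ({k} : Finset (Fin K))ᶜ},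
          (∑ b, (if l = i ∨ l = j then (if b then μ l.1 else 0) else bern (μ l.1) b))
          = (if l = i then μ i.1 else 1) * (if l = j then μ j.1 else 1) := by
        intro l
        rw [Fintype.sum_bool]
        by_cases hli : l = i
        · subst hli
          rw [if_pos (Or.inl rfl), if_pos (Or.inl rfl), if_pos rfl, if_neg hij]
          norm_num
        · by_cases hlj : l = j
          · subst hlj
            rw [if_pos (Or.inr rfl), if_pos (Or.inr rfl), if_neg hli, if_pos rfl]
            norm_num
          · rw [if_neg (by tauto), if_neg (by tauto), if_neg hli, if_neg hlj]
            simp [bern]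
      rw [Finset.prod_congr rfl (fun l _ => hptwise l), Finset.prod_mul_distrib,
        Finset.prod_ite_eq' univ i (fun l => μ i.1), Finset.prod_ite_eq' univ j (fun l => μ j.1)]
      simp
    calc ∑ c, (if 2 ≤ (S c).card then q c else 0)
        ≤ ∑ c, ∑ i, ∑ j, (if i ≠ j then F i j c else 0) :=
          Finset.sum_le_sum fun c _ => step1 c
      _ = ∑ i : {i // i ∈ ({k} : Finset (Fin K))ᶜ}, ∑ j : {i // i ∈ ({k} : Finset (Fin K))ᶜ}, ∑ c, (if i ≠ j then F i j c else 0) := by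
          rw [show (∑ c, ∑ i, ∑ j, (if i ≠ j then F i j c else 0))
              = ∑ i, ∑ c, ∑ j, (if i ≠ j then F i j c else 0) from Finset.sum_comm]
          exact Finset.sum_congr rfl fun i _ => Finset.sum_comm
      _ = ∑ i : {i // i ∈ ({k} : Finset (Fin K))ᶜ}, ∑ j : {i // i ∈ ({k} : Finset (Fin K))ᶜ}, (if i ≠ j then μ i.1 * μ j.1 else 0) := by
          refine Finset.sum_congr rfl fun i _ => Finset.sum_congr rfl fun j _ => ?_
          by_cases hij : i ≠ j
          · rw [Finset.sum_ite_of_true (fun _ _ => hij), if_pos hij]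
            exact step2 i j hij
          · rw [Finset.sum_ite_of_false (fun _ _ => hij), if_neg hij]
            exact Finset.sum_const_zero
      _ ≤ ∑ i : {i // i ∈ ({k} : Finset (Fin K))ᶜ}, ∑ j : {i // i ∈ ({k} : Finset (Fin K))ᶜ}, μ i.1 * μ j.1 := by
          apply Finset.sum_le_sum
          intro i _
          apply Finset.sum_le_sum
          intro j _
          split_ifs
          · exact le_rfl
          · exact mul_nonneg (hμ0 _) (hμ0 _)
      _ = (∑ i : {i // i ∈ ({k} : Finset (Fin K))ᶜ}, μ i.1)^2 := by
          rw [sq, Finset.sum_mul_sum]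
      _ ≤ (∑ i : Fin K, μ i)^2 := by
          have hsub : ∑ i : {i // i ∈ ({k} : Finset (Fin K))ᶜ}, μ i.1 ≤ ∑ i : Fin K, μ i := by
            rw [← Finset.sum_subtype (({k} : Finset (Fin K))ᶜ) (fun x => Iff.rfl) μ]
            exact Finset.sum_le_sum_of_subset_of_nonneg (Finset.subset_univ _)
              (fun i _ _ => hμ0 i)
          have hnn : 0 ≤ ∑ i : {i // i ∈ ({k} : Finset (Fin K))ᶜ}, μ i.1 :=
            Finset.sum_nonneg fun i _ => hμ0 _
          exact pow_le_pow_left₀ hnn hsub 2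
  -- absolute continuity and nonnegativity of the main divergence
  have hAC0 : AbsCont (Wy (xU {k})) (Wy (xU ∅)) :=
    (hACy {k} (Finset.singleton_nonempty k) k (Finset.mem_singleton_self k)).2
  have hD0 : 0 ≤ klDiv (Wy (xU {k})) (Wy (xU ∅)) := klDiv_nonneg' (hWy _) (hWy _) hAC0
  -- crude bound valid for every c
  have hG2 : ∀ c, m * GA c + (1-m) * GB c ≤ 2 := by
    intro c
    have hGA1 : m * GA c ≤ 1 := by
      simp only [hGAdef, hPbdef]
      exact klA_crude (Wc true c) (Wc false c) (hWy _) (fun y => (hWy _).1 y) m (1-m)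
        hm0 hm1 (by linarith)
    have hGB1 : (1-m) * GB c ≤ 1 := by
      have h := klA_crude (Wc false c) (Wc true c) (hWy _) (fun y => (hWy _).1 y) (1-m) m
        (by linarith) (by linarith) hm0
      have hco : ∀ y : Y, (1-m) * Wc false c y + m * Wc true c y
          = m * Wc true c y + (1-m) * Wc false c y := fun y => by ring
      simp only [hco] at h
      simp only [hGBdef, hPbdef]
      exact h
    linarith
  -- facts about the supremum and the sum
  have hbdd : BddAbove (Set.range μ) := (Set.finite_range μ).bddAbove
  have hsup_ge : ∀ i, μ i ≤ ⨆ i, μ i := fun i => le_ciSup hbdd i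
  have hsup0 : 0 ≤ ⨆ i, μ i := le_trans (hμ0 k) (hsup_ge k)
  have hS0 : 0 ≤ ∑ i, μ i := Finset.sum_nonneg fun i _ => hμ0 i
  have hmS : m ≤ ∑ i, μ i := Finset.single_le_sum (fun i _ => hμ0 i) (Finset.mem_univ k)
  have hSle : ∑ i, μ i ≤ K * (⨆ i, μ i) := by
    calc ∑ i, μ i ≤ ∑ _i : Fin K, (⨆ j, μ j) := Finset.sum_le_sum fun i _ => hsup_ge i
      _ = K * (⨆ j, μ j) := by
          rw [Finset.sum_const, Finset.card_univ, Fintype.card_fin, nsmul_eq_mul]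
  rw [hA]
  by_cases hhalf : ∀ i, μ i ≤ 2⁻¹
  · -- all probabilities small
    have hm2 : m ≤ 2⁻¹ := hhalf k
    have hG0 : ∀ c, (S c).card = 0 → m * GA c + (1-m) * GB c ≤
        m * klDiv (Wy (xU {k})) (Wy (xU ∅)) + 2*m^2 + 2*m^2*E := by
      intro c hc
      have hSe : S c = ∅ := Finset.card_eq_zero.mp hc
      have hT : Wc true c = Wy (xU {k}) := by
        rw [hWcT c, hSe]
        exact congrArg (fun U => Wy (xU U)) (by simp : insert k (∅ : Finset (Fin K)) = {k})
      have hF : Wc false c = Wy (xU ∅) := by rw [hWcF c, hSe]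
      have hGAle : GA c ≤ klDiv (Wy (xU {k})) (Wy (xU ∅)) + 2*m := by
        have h := klA_bound (Wy (xU {k})) (Wy (xU ∅)) (hWy _) (hWy _) hAC0 hm0 hm2
        simp only [hGAdef, hPbdef, hT, hF]
        exact h
      have hGBle : GB c ≤ 2*m^2 * ∑ y, (Wy (xU {k}) y - Wy (xU ∅) y)^2 / Wy (xU ∅) y := by
        have h := klB_bound (Wy (xU {k})) (Wy (xU ∅)) (hWy _) (hWy _) hAC0 hm0 hm2
        simp only [hGBdef, hPbdef, hT, hF]
        exact h
      have h1 : m * GA c ≤ m * (klDiv (Wy (xU {k})) (Wy (xU ∅)) + 2*m) :=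
        mul_le_mul_of_nonneg_left hGAle hm0
      have h3 : GB c ≤ 2*m^2*E :=
        le_trans hGBle (mul_le_mul_of_nonneg_left (hEchi {k} ∅) (by positivity))
      have h4 : (1-m) * GB c ≤ (1-m) * (2*m^2*E) :=
        mul_le_mul_of_nonneg_left h3 (by linarith)
      have hX : 0 ≤ 2*m^2*E := mul_nonneg (by positivity) hE0
      have h5 : (1-m) * (2*m^2*E) ≤ 2*m^2*E := by nlinarith [mul_nonneg hm0 hX]
      nlinarith [h1, h4, h5]
    have hG1 : ∀ c, (S c).card = 1 → m * GA c + (1-m) * GB c ≤ m * (2*E+1) := by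
      intro c hc
      obtain ⟨i₀, hSe⟩ := Finset.card_eq_one.mp hc
      have hU : Wc true c = Wy (xU (insert k {i₀})) := by rw [hWcT c, hSe]
      have hV : Wc false c = Wy (xU {i₀}) := by rw [hWcF c, hSe]
      have hACU : AbsCont (Wy (xU (insert k {i₀}))) (Wy (xU {i₀})) :=
        (hACy (insert k {i₀}) (Finset.insert_nonempty _ _) i₀
          (Finset.mem_insert_of_mem (Finset.mem_singleton_self i₀))).1
      have hGAle : GA c ≤ klDiv (Wy (xU (insert k {i₀}))) (Wy (xU {i₀})) + 2*m := by
        have h := klA_bound (Wy (xU (insert k {i₀}))) (Wy (xU {i₀})) (hWy _) (hWy _)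
          hACU hm0 hm2
        simp only [hGAdef, hPbdef, hU, hV]
        exact h
      have hGBle : GB c ≤ 2*m^2 *
          ∑ y, (Wy (xU (insert k {i₀})) y - Wy (xU {i₀}) y)^2 / Wy (xU {i₀}) y := by
        have h := klB_bound (Wy (xU (insert k {i₀}))) (Wy (xU {i₀})) (hWy _) (hWy _)
          hACU hm0 hm2
        simp only [hGBdef, hPbdef, hU, hV]
        exact h
      have h1 : m * GA c ≤ m * (E + 1) := by
        apply mul_le_mul_of_nonneg_left _ hm0
        have := hEkl (insert k {i₀}) {i₀}
        linarith
      have h3 : GB c ≤ 2*m^2*E :=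
        le_trans hGBle (mul_le_mul_of_nonneg_left (hEchi _ _) (by positivity))
      have h4 : (1-m) * GB c ≤ (1-m) * (2*m^2*E) :=
        mul_le_mul_of_nonneg_left h3 (by linarith)
      have h5 : (1-m) * (2*m^2*E) ≤ m * E := by
        nlinarith [mul_nonneg hm0 hE0, mul_nonneg (mul_nonneg hm0 hm0) hE0,
          mul_nonneg (mul_nonneg (mul_nonneg hm0 hm0) hm0) hE0]
      nlinarith [h1, h4, h5]
    have hb0 : 0 ≤ m * klDiv (Wy (xU {k})) (Wy (xU ∅)) + 2*m^2 + 2*m^2*E := by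
      have h6 := mul_nonneg hm0 hD0
      have h7 : 0 ≤ 2*m^2*E := mul_nonneg (by positivity) hE0
      nlinarith [sq_nonneg m]
    have hb1 : 0 ≤ m * (2*E+1) := mul_nonneg hm0 (by linarith)
    have key : ∀ c, q c * (m * GA c + (1-m) * GB c) ≤
        (m * klDiv (Wy (xU {k})) (Wy (xU ∅)) + 2*m^2 + 2*m^2*E) *
          (if (S c).card = 0 then q c else 0)
        + (m * (2*E+1)) * (if (S c).card = 1 then q c else 0)
        + 2 * (if 2 ≤ (S c).card then q c else 0) := by
      intro c
      rcases Nat.lt_or_ge (S c).card 2 with h2 | h2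
      · rcases (by omega : (S c).card = 0 ∨ (S c).card = 1) with h0 | h1
        · rw [if_pos h0, if_neg (by omega), if_neg (by omega)]
          simp only [mul_zero, add_zero]
          rw [mul_comm (m * klDiv (Wy (xU {k})) (Wy (xU ∅)) + 2*m^2 + 2*m^2*E) (q c)]
          exact mul_le_mul_of_nonneg_left (hG0 c h0) (hq_nn c)
        · rw [if_neg (by omega), if_pos h1, if_neg (by omega)]
          simp only [mul_zero, add_zero, zero_add]
          rw [mul_comm (m * (2*E+1)) (q c)]
          exact mul_le_mul_of_nonneg_left (hG1 c h1) (hq_nn c)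
      · rw [if_neg (by omega), if_neg (by omega), if_pos h2]
        simp only [mul_zero, add_zero, zero_add]
        rw [mul_comm (2:ℝ) (q c)]
        exact mul_le_mul_of_nonneg_left (hG2 c) (hq_nn c)
    calc ∑ c : {i // i ∈ ({k} : Finset (Fin K))ᶜ} → Bool, q c * (m * GA c + (1-m) * GB c)
        ≤ ∑ c : {i // i ∈ ({k} : Finset (Fin K))ᶜ} → Bool,
          ((m * klDiv (Wy (xU {k})) (Wy (xU ∅)) + 2*m^2 + 2*m^2*E) *
            (if (S c).card = 0 then q c else 0)
          + (m * (2*E+1)) * (if (S c).card = 1 then q c else 0)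
          + 2 * (if 2 ≤ (S c).card then q c else 0)) := Finset.sum_le_sum fun c _ => key c
      _ = (m * klDiv (Wy (xU {k})) (Wy (xU ∅)) + 2*m^2 + 2*m^2*E) *
            (∑ c, (if (S c).card = 0 then q c else 0))
          + (m * (2*E+1)) * (∑ c, (if (S c).card = 1 then q c else 0))
          + 2 * (∑ c, (if 2 ≤ (S c).card then q c else 0)) := by
          rw [Finset.sum_add_distrib, Finset.sum_add_distrib, ← Finset.mul_sum,
            ← Finset.mul_sum, ← Finset.mul_sum]
      _ ≤ (m * klDiv (Wy (xU {k})) (Wy (xU ∅)) + 2*m^2 + 2*m^2*E) * 1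
          + (m * (2*E+1)) * (∑ i, μ i) + 2 * (∑ i, μ i)^2 := by
          exact add_le_add (add_le_add (mul_le_mul_of_nonneg_left hL0 hb0)
            (mul_le_mul_of_nonneg_left hL1 hb1))
            (mul_le_mul_of_nonneg_left hL2 (by norm_num))
      _ ≤ m * klDiv (Wy (xU {k})) (Wy (xU ∅)) + (4*E + 2*K + 9) * (⨆ i, μ i) * ∑ i, μ i := by
          have t1 : m * m ≤ (⨆ i, μ i) * ∑ i, μ i :=
            mul_le_mul (hsup_ge k) hmS hm0 hsup0
          have t2 : m * ∑ i, μ i ≤ (⨆ i, μ i) * ∑ i, μ i :=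
            mul_le_mul_of_nonneg_right (hsup_ge k) hS0
          have t3 : (∑ i, μ i) * (∑ i, μ i) ≤ (K * (⨆ i, μ i)) * ∑ i, μ i :=
            mul_le_mul_of_nonneg_right hSle hS0
          have t4 : 0 ≤ (⨆ i, μ i) * ∑ i, μ i := mul_nonneg hsup0 hS0
          have u1 : 2*(1+E)*(m*m) ≤ 2*(1+E)*((⨆ i, μ i) * ∑ i, μ i) :=
            mul_le_mul_of_nonneg_left t1 (by linarith)
          have u2 : (2*E+1)*(m * ∑ i, μ i) ≤ (2*E+1)*((⨆ i, μ i) * ∑ i, μ i) :=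
            mul_le_mul_of_nonneg_left t2 (by linarith)
          nlinarith [u1, u2, t3, t4]
  · -- some probability exceeds one half
    push_neg at hhalf
    obtain ⟨i₀, hi₀⟩ := hhalf
    have hbound : ∑ c : {i // i ∈ ({k} : Finset (Fin K))ᶜ} → Bool,
        q c * (m * GA c + (1-m) * GB c) ≤ 2 := by
      calc ∑ c : {i // i ∈ ({k} : Finset (Fin K))ᶜ} → Bool, q c * (m * GA c + (1-m) * GB c)
          ≤ ∑ c : {i // i ∈ ({k} : Finset (Fin K))ᶜ} → Bool, q c * 2 :=
            Finset.sum_le_sum fun c _ => mul_le_mul_of_nonneg_left (hG2 c) (hq_nn c)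
        _ = 2 := by rw [← Finset.sum_mul, hq_sum, one_mul]
    have h1 : (2⁻¹ : ℝ) < ⨆ i, μ i := lt_of_lt_of_le hi₀ (hsup_ge i₀)
    have h2 : (2⁻¹ : ℝ) < ∑ i, μ i :=
      lt_of_lt_of_le hi₀ (Finset.single_le_sum (fun i _ => hμ0 i) (Finset.mem_univ i₀))
    have h3 : 0 ≤ m * klDiv (Wy (xU {k})) (Wy (xU ∅)) := mul_nonneg hm0 hD0
    have h4 : (9:ℝ) ≤ 4*E+2*K+9 := by nlinarith [hE0, Nat.cast_nonneg (α := ℝ) K]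
    have h5 : (2⁻¹ * 2⁻¹ : ℝ) ≤ (⨆ i, μ i) * ∑ i, μ i :=
      mul_le_mul h1.le h2.le (by norm_num) hsup0
    have h6 : (9:ℝ)*(2⁻¹*2⁻¹) ≤ (4*E+2*K+9)*((⨆ i, μ i) * ∑ i, μ i) :=
      mul_le_mul h4 h5 (by norm_num) (by linarith)
    nlinarith [hbound, h3, h6]
end
end
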